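/- arXiv:2107.00991 — 9 statements merged into one kernel-verified Lean document; each statement's English description precedes it below -/
import Mathlib

section
/- Let m > n ≥ 0 and let φ : V_{−(2m+1)} → V_{−(2n+1)} be a kG-module homomorphism. Then the image of φ is contained in the G-fixed points of V_{−(2n+1)}. -/
/-- The Klein four-group `G = C₂ × C₂`. -/
abbrev K4 : Type := Multiplicative (ZMod 2 × ZMod 2)

/-- The generator `σ` of the Klein four-group. -/
def sg : K4 := Multiplicative.ofAdd ((1 : ZMod 2), (0 : ZMod 2))

/-- The generator `τ` of the Klein four-group. -/
def tg : K4 := Multiplicative.ofAdd ((0 : ZMod 2), (1 : ZMod 2))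

/-- The subgroup `H₁ = ⟨σ⟩`. -/
def H1 : Subgroup K4 := Subgroup.zpowers sg

/-- The subgroup `H₂ = ⟨τ⟩`. -/
def H2 : Subgroup K4 := Subgroup.zpowers tg

/-- The subgroup `H₃ = ⟨στ⟩`. -/
def H3 : Subgroup K4 := Subgroup.zpowers (sg * tg)

/-- `V` carries the structure of the module `V_{-(2n+1)}`: the basis vector `B (Sum.inl i)`
is `a_{i+1}` (for `0 ≤ i ≤ n-1`) and `B (Sum.inr j)` is `b_j` (for `0 ≤ j ≤ n`), with
`X·aᵢ = b_{i-1}`, `Y·aᵢ = bᵢ`, `X·bⱼ = Y·bⱼ = 0`, i.e. (with `σ = 1 + X`, `τ = 1 + Y`)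
`σ·aᵢ = aᵢ + b_{i-1}`, `τ·aᵢ = aᵢ + bᵢ`, and `σ, τ` fix the `bⱼ`. -/
def IsVneg (k : Type) [Field k] (n : ℕ) (V : Type) [AddCommGroup V] [Module k V]
    [DistribMulAction K4 V] (B : Module.Basis (Fin n ⊕ Fin (n + 1)) k V) : Prop :=
  (∀ i : Fin n, sg • B (Sum.inl i) = B (Sum.inl i) + B (Sum.inr i.castSucc)) ∧
  (∀ i : Fin n, tg • B (Sum.inl i) = B (Sum.inl i) + B (Sum.inr i.succ)) ∧
  (∀ j : Fin (n + 1), sg • B (Sum.inr j) = B (Sum.inr j)) ∧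
  (∀ j : Fin (n + 1), tg • B (Sum.inr j) = B (Sum.inr j))

theorem smul_formula {k : Type} [Field k] {n : ℕ} {V : Type} [AddCommGroup V] [Module k V]
    [DistribMulAction K4 V] [SMulCommClass K4 k V] (B : Module.Basis (Fin n ⊕ Fin (n+1)) k V)
    (g : K4) (f : Fin n → Fin (n+1))
    (h1 : ∀ i, g • B (Sum.inl i) = B (Sum.inl i) + B (Sum.inr (f i)))
    (h2 : ∀ j, g • B (Sum.inr j) = B (Sum.inr j)) (w : V) :
    g • w = w + ∑ i : Fin n, B.repr w (Sum.inl i) • B (Sum.inr (f i)) := by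
  have h : (DistribSMul.toLinearMap k V g) =
      LinearMap.id + ∑ i : Fin n, (B.coord (Sum.inl i)).smulRight (B (Sum.inr (f i))) := by
    apply B.ext; intro x
    rw [LinearMap.add_apply, LinearMap.sum_apply]
    cases x with
    | inl i =>
        simp only [DistribSMul.toLinearMap_apply, h1 i, LinearMap.id_apply,
          LinearMap.smulRight_apply, Module.Basis.coord_apply, Module.Basis.repr_self,
          Finsupp.single_apply, Sum.inl.injEq, ite_smul, one_smul, zero_smul]
        rw [Finset.sum_ite_eq Finset.univ i]
        simp
    | inr j =>
        simp [DistribSMul.toLinearMap_apply, h2 j, Module.Basis.repr_self,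
          Finsupp.single_apply]
  have := LinearMap.congr_fun h w
  simpa [Module.Basis.coord_apply, DistribSMul.toLinearMap_apply] using this

theorem repr_sum_hit {k : Type} [Field k] {n : ℕ} {V : Type} [AddCommGroup V] [Module k V]
    (B : Module.Basis (Fin n ⊕ Fin (n+1)) k V) (c : Fin n → k) (f : Fin n → Fin (n+1))
    (hf : Function.Injective f) (l₀ : Fin n) :
    B.repr (∑ l, c l • B (Sum.inr (f l))) (Sum.inr (f l₀)) = c l₀ := by
  rw [map_sum, Finsupp.finset_sum_apply]
  rw [Finset.sum_eq_single l₀]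
  · simp [Module.Basis.repr_self]
  · intro l _ hl
    simp [Module.Basis.repr_self, Finsupp.single_apply, hf.ne hl]
  · simp

theorem repr_sum_miss {k : Type} [Field k] {n : ℕ} {V : Type} [AddCommGroup V] [Module k V]
    (B : Module.Basis (Fin n ⊕ Fin (n+1)) k V) (c : Fin n → k) (f : Fin n → Fin (n+1))
    (j : Fin (n+1)) (hj : ∀ l, f l ≠ j) :
    B.repr (∑ l, c l • B (Sum.inr (f l))) (Sum.inr j) = 0 := by
  rw [map_sum, Finsupp.finset_sum_apply]
  apply Finset.sum_eq_zero
  intro l _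
  simp [Module.Basis.repr_self, Finsupp.single_apply, hj l]

theorem repr_sum_inl {k : Type} [Field k] {n : ℕ} {V : Type} [AddCommGroup V] [Module k V]
    (B : Module.Basis (Fin n ⊕ Fin (n+1)) k V) (c : Fin n → k) (f : Fin n → Fin (n+1))
    (l : Fin n) :
    B.repr (∑ l', c l' • B (Sum.inr (f l'))) (Sum.inl l) = 0 := by
  rw [map_sum, Finsupp.finset_sum_apply]
  apply Finset.sum_eq_zero
  intro l' _
  simp [Module.Basis.repr_self, Finsupp.single_apply]

/-- Let `m > n ≥ 0` and let `φ : V_{-(2m+1)} → V_{-(2n+1)}` be a `kG`-module homomorphism.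
Then the image of `φ` is contained in the `G`-fixed points of `V_{-(2n+1)}`. -/
theorem stmt1 (k : Type) [Field k] [CharP k 2] (m n : ℕ) (hmn : n < m)
    (M : Type) [AddCommGroup M] [Module k M] [DistribMulAction K4 M] [SMulCommClass K4 k M]
    (N : Type) [AddCommGroup N] [Module k N] [DistribMulAction K4 N] [SMulCommClass K4 k N]
    (BM : Module.Basis (Fin m ⊕ Fin (m + 1)) k M) (hM : IsVneg k m M BM)
    (BN : Module.Basis (Fin n ⊕ Fin (n + 1)) k N) (hN : IsVneg k n N BN)
    (φ : M →ₗ[k] N) (hφ : ∀ (g : K4) (v : M), φ (g • v) = g • φ v) :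
    ∀ (v : M) (g : K4), g • φ v = φ v := by
  obtain ⟨hM1, hM2, hM3, hM4⟩ := hM
  obtain ⟨hN1, hN2, hN3, hN4⟩ := hN
  -- coefficient function
  set c : ℕ → ℕ → k := fun i j =>
    if h : i < m ∧ j < n then BN.repr (φ (BM (Sum.inl ⟨i, h.1⟩))) (Sum.inl ⟨j, h.2⟩) else 0
    with hc
  -- b-vectors map to fixed part: no a-components
  have zero_b : ∀ (j : Fin (m+1)) (l : Fin n), BN.repr (φ (BM (Sum.inr j))) (Sum.inl l) = 0 := by
    intro j l
    have h := hφ sg (BM (Sum.inr j))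
    rw [hM3 j, smul_formula BN sg Fin.castSucc hN1 hN3] at h
    have hz : (∑ l', BN.repr (φ (BM (Sum.inr j))) (Sum.inl l') • BN (Sum.inr l'.castSucc)) = 0 :=
      (left_eq_add.mp h)
    have := repr_sum_hit BN (fun l' => BN.repr (φ (BM (Sum.inr j))) (Sum.inl l'))
      Fin.castSucc (Fin.castSucc_injective n) l
    rw [hz] at this
    simpa using this.symm
  -- key chain equation
  have chain : ∀ (i : Fin m) (hi : i.val + 1 < m),
      (∑ l, BN.repr (φ (BM (Sum.inl ⟨i.val + 1, hi⟩))) (Sum.inl l) • BN (Sum.inr l.castSucc)) =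
      (∑ l, BN.repr (φ (BM (Sum.inl i))) (Sum.inl l) • BN (Sum.inr l.succ)) := by
    intro i hi
    set i' : Fin m := ⟨i.val + 1, hi⟩ with hi'
    have hcs : i'.castSucc = i.succ := by ext; simp [hi']
    have e1 := hφ sg (BM (Sum.inl i'))
    rw [hM1 i', map_add, smul_formula BN sg Fin.castSucc hN1 hN3] at e1
    have e1' : φ (BM (Sum.inr i'.castSucc)) =
        ∑ l, BN.repr (φ (BM (Sum.inl i'))) (Sum.inl l) • BN (Sum.inr l.castSucc) :=
      add_left_cancel e1
    have e2 := hφ tg (BM (Sum.inl i))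
    rw [hM2 i, map_add, smul_formula BN tg Fin.succ hN2 hN4] at e2
    have e2' : φ (BM (Sum.inr i.succ)) =
        ∑ l, BN.repr (φ (BM (Sum.inl i))) (Sum.inl l) • BN (Sum.inr l.succ) :=
      add_left_cancel e2
    rw [← e1', hcs, e2']
  -- coefficient recurrences
  have F0 : ∀ i : ℕ, c (i + 1) 0 = 0 := by
    intro i
    rw [hc]
    dsimp only
    split
    next h0 =>
      obtain ⟨hi, hn⟩ := h0
      have e := chain ⟨i, Nat.lt_of_succ_lt hi⟩ hi
      have := congrArg (fun z => BN.repr z (Sum.inr ((⟨0, hn⟩ : Fin n).castSucc))) e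
      dsimp only at this
      rw [repr_sum_hit BN _ Fin.castSucc (Fin.castSucc_injective n) ⟨0, hn⟩,
        repr_sum_miss BN _ Fin.succ _ (fun l => by
          intro hcontra
          have := congrArg Fin.val hcontra
          simp [Fin.val_succ] at this)] at this
      simpa using this
    next => rfl
  have FT : ∀ i : ℕ, i + 1 < m → 0 < n → c i (n - 1) = 0 := by
    intro i him hn
    rw [hc]
    dsimp only
    split
    next h0 =>
      obtain ⟨hi, hjn⟩ := h0
      have e := chain ⟨i, hi⟩ him
      have := congrArg (fun z => BN.repr z (Sum.inr (Fin.last n))) e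
      dsimp only at this
      rw [repr_sum_miss BN _ Fin.castSucc (Fin.last n) (fun l => by
          intro hcontra
          have := congrArg Fin.val hcontra
          simp at this
          omega)] at this
      have hlast : (Fin.last n) = (⟨n - 1, hjn⟩ : Fin n).succ := by
        ext; simp; omega
      rw [hlast, repr_sum_hit BN _ Fin.succ (Fin.succ_injective n) ⟨n - 1, hjn⟩] at this
      simpa using this.symm
    next h0 => rfl
  have F1 : ∀ i j : ℕ, i + 1 < m → j + 1 < n → c (i + 1) (j + 1) = c i j := by
    intro i j him hjn
    have e := chain ⟨i, Nat.lt_of_succ_lt him⟩ him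
    have := congrArg (fun z => BN.repr z (Sum.inr ((⟨j, Nat.lt_of_succ_lt hjn⟩ : Fin n).succ))) e
    dsimp only at this
    have hsc : ((⟨j, Nat.lt_of_succ_lt hjn⟩ : Fin n).succ) = ((⟨j + 1, hjn⟩ : Fin n).castSucc) := by
      ext; simp
    rw [repr_sum_hit BN _ Fin.succ (Fin.succ_injective n) ⟨j, Nat.lt_of_succ_lt hjn⟩] at this
    rw [hsc, repr_sum_hit BN _ Fin.castSucc (Fin.castSucc_injective n) ⟨j + 1, hjn⟩] at this
    rw [hc]
    dsimp only
    rw [dif_pos ⟨him, hjn⟩, dif_pos ⟨Nat.lt_of_succ_lt him, Nat.lt_of_succ_lt hjn⟩]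
    exact this
  -- diagonal propagation
  have diag : ∀ t i j : ℕ, i + t < m → j + t < n → c (i + t) (j + t) = c i j := by
    intro t
    induction t with
    | zero => intro i j _ _; rfl
    | succ s ih =>
      intro i j him hjn
      have h1 : (i + s) + 1 < m := by omega
      have h2 : (j + s) + 1 < n := by omega
      have := F1 (i + s) (j + s) h1 h2
      rw [show i + (s+1) = (i+s)+1 by omega, show j + (s+1) = (j+s)+1 by omega, this]
      exact ih i j (by omega) (by omega)
  -- all a-coefficients vanish
  have allzero : ∀ i j : ℕ, i < m → j < n → c i j = 0 := by
    intro i j him hjn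
    rcases le_or_gt i j with hle | hlt
    · -- push to top row n-1
      have t := n - 1 - j
      have hd := diag (n - 1 - j) i j (by omega) (by omega)
      have htop := FT (i + (n - 1 - j)) (by omega) (by omega)
      rw [show j + (n - 1 - j) = n - 1 by omega] at hd
      rw [← hd, htop]
    · -- push to column 0
      have hd := diag j (i - j) 0 (by omega) (by omega)
      rw [show i - j + j = i by omega, Nat.zero_add] at hd
      have h0 := F0 (i - j - 1)
      rw [show i - j - 1 + 1 = i - j by omega] at h0
      rw [hd, h0]
  -- all inl-coordinates of φ v vanish
  have main : ∀ (v : M) (l : Fin n), BN.repr (φ v) (Sum.inl l) = 0 := by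
    intro v l
    have hv := BM.sum_repr v
    calc BN.repr (φ v) (Sum.inl l)
        = BN.repr (φ (∑ x, BM.repr v x • BM x)) (Sum.inl l) := by rw [hv]
      _ = ∑ x, BM.repr v x * BN.repr (φ (BM x)) (Sum.inl l) := by
          rw [map_sum, map_sum, Finsupp.finset_sum_apply]
          refine Finset.sum_congr rfl fun x _ => ?_
          rw [map_smul, map_smul]
          simp [Finsupp.smul_apply, smul_eq_mul]
      _ = 0 := by
          apply Finset.sum_eq_zero
          intro x _
          cases x with
          | inl i =>
              have := allzero i.val l.val i.isLt l.isLt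
              rw [hc] at this
              dsimp only at this
              rw [dif_pos ⟨i.isLt, l.isLt⟩] at this
              simp only [Fin.eta] at this
              rw [this, mul_zero]
          | inr j => rw [zero_b j l, mul_zero]
  -- fixedness under the generators
  have fix_sg : ∀ v : M, sg • φ v = φ v := by
    intro v
    rw [smul_formula BN sg Fin.castSucc hN1 hN3]
    simp [main v]
  have fix_tg : ∀ v : M, tg • φ v = φ v := by
    intro v
    rw [smul_formula BN tg Fin.succ hN2 hN4]
    simp [main v]
  intro v g
  have hg : g = 1 ∨ g = sg ∨ g = tg ∨ g = sg * tg := by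
    revert g; decide
  rcases hg with rfl | rfl | rfl | rfl
  · rw [one_smul]
  · exact fix_sg v
  · exact fix_tg v
  · rw [mul_smul, fix_tg v, fix_sg v]
end

section
/- Let m > n ≥ 0 and let φ : V_{−(2m+1)} → V_{−(2n+1)} be a kG-module homomorphism. Then the G-fixed points of V_{−(2m+1)} are contained in the kernel of φ. -/
lemma smul_sub_repr {k : Type} [Field k] {n : ℕ} {V : Type} [AddCommGroup V] [Module k V]
    [DistribMulAction K4 V] [SMulCommClass K4 k V]
    (B : Module.Basis (Fin n ⊕ Fin (n + 1)) k V) (g : K4) (f : Fin n → Fin (n + 1))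
    (h1 : ∀ i, g • B (Sum.inl i) = B (Sum.inl i) + B (Sum.inr (f i)))
    (h2 : ∀ j, g • B (Sum.inr j) = B (Sum.inr j)) (w : V) :
    g • w - w = ∑ i : Fin n, B.repr w (Sum.inl i) • B (Sum.inr (f i)) := by
  have hw := B.sum_repr w
  calc g • w - w = ∑ x, B.repr w x • (g • B x - B x) := by
        conv_lhs => rw [← hw]
        rw [Finset.smul_sum, ← Finset.sum_sub_distrib]
        refine Finset.sum_congr rfl fun x _ => ?_
        rw [smul_sub, smul_comm]
    _ = _ := by
        rw [Fintype.sum_sum_type]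
        simp [h1, h2]

lemma repr_sum_apply {k : Type} [Field k] {n : ℕ} {V : Type} [AddCommGroup V] [Module k V]
    (B : Module.Basis (Fin n ⊕ Fin (n + 1)) k V) (c : Fin n → k) (f : Fin n → Fin (n + 1))
    (x : Fin (n + 1)) :
    B.repr (∑ j : Fin n, c j • B (Sum.inr (f j))) (Sum.inr x)
      = ∑ j : Fin n, if f j = x then c j else 0 := by
  rw [map_sum]
  rw [Finsupp.finset_sum_apply]
  refine Finset.sum_congr rfl fun j _ => ?_
  rw [map_smul, B.repr_self]
  simp [Finsupp.single_apply]

lemma sum_ite_inj {k : Type} [Field k] {n n' : ℕ} (c : Fin n → k) (f : Fin n → Fin n')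
    (hf : Function.Injective f) (j0 : Fin n) :
    ∑ j : Fin n, (if f j = f j0 then c j else 0) = c j0 := by
  rw [Finset.sum_eq_single j0]
  · simp
  · intro j _ hj; rw [if_neg (fun h => hj (hf h))]
  · intro h; exact absurd (Finset.mem_univ j0) h

lemma fixed_inl {k : Type} [Field k] {n : ℕ} {V : Type} [AddCommGroup V] [Module k V]
    [DistribMulAction K4 V] [SMulCommClass K4 k V]
    (B : Module.Basis (Fin n ⊕ Fin (n + 1)) k V) (g : K4) (f : Fin n → Fin (n + 1))
    (hf : Function.Injective f)
    (h1 : ∀ i, g • B (Sum.inl i) = B (Sum.inl i) + B (Sum.inr (f i)))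
    (h2 : ∀ j, g • B (Sum.inr j) = B (Sum.inr j)) (w : V) (hw : g • w = w)
    (i : Fin n) : B.repr w (Sum.inl i) = 0 := by
  have h0 : ∑ j : Fin n, B.repr w (Sum.inl j) • B (Sum.inr (f j)) = 0 := by
    rw [← smul_sub_repr B g f h1 h2 w, hw, sub_self]
  have := congrArg (fun x => B.repr x (Sum.inr (f i))) h0
  simp only [repr_sum_apply, map_zero, Finsupp.coe_zero, Pi.zero_apply] at this
  rw [sum_ite_inj _ f hf i] at this
  exact this

/-- Let `m > n ≥ 0` and let `φ : V_{-(2m+1)} → V_{-(2n+1)}` be a `kG`-module homomorphism.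
Then the `G`-fixed points of `V_{-(2m+1)}` are contained in the kernel of `φ`. -/
theorem stmt2 (k : Type) [Field k] [CharP k 2] (m n : ℕ) (hmn : n < m)
    (M : Type) [AddCommGroup M] [Module k M] [DistribMulAction K4 M] [SMulCommClass K4 k M]
    (N : Type) [AddCommGroup N] [Module k N] [DistribMulAction K4 N] [SMulCommClass K4 k N]
    (BM : Module.Basis (Fin m ⊕ Fin (m + 1)) k M) (hM : IsVneg k m M BM)
    (BN : Module.Basis (Fin n ⊕ Fin (n + 1)) k N) (hN : IsVneg k n N BN)
    (φ : M →ₗ[k] N) (hφ : ∀ (g : K4) (v : M), φ (g • v) = g • φ v) :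
    ∀ v : M, (∀ g : K4, g • v = v) → φ v = 0 := by
  obtain ⟨hMs, hMt, hMbs, hMbt⟩ := hM
  obtain ⟨hNs, hNt, hNbs, hNbt⟩ := hN
  have key1 : ∀ i : Fin m, φ (BM (Sum.inr i.castSucc)) =
      ∑ j : Fin n, BN.repr (φ (BM (Sum.inl i))) (Sum.inl j) • BN (Sum.inr j.castSucc) := by
    intro i
    have h : φ (BM (Sum.inr i.castSucc)) = sg • φ (BM (Sum.inl i)) - φ (BM (Sum.inl i)) := by
      rw [← hφ, ← map_sub, hMs i, add_sub_cancel_left]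
    rw [h, smul_sub_repr BN sg Fin.castSucc hNs hNbs]
  have key2 : ∀ i : Fin m, φ (BM (Sum.inr i.succ)) =
      ∑ j : Fin n, BN.repr (φ (BM (Sum.inl i))) (Sum.inl j) • BN (Sum.inr j.succ) := by
    intro i
    have h : φ (BM (Sum.inr i.succ)) = tg • φ (BM (Sum.inl i)) - φ (BM (Sum.inl i)) := by
      rw [← hφ, ← map_sub, hMt i, add_sub_cancel_left]
    rw [h, smul_sub_repr BN tg Fin.succ hNt hNbt]
  have keyfix : ∀ p : Fin (m + 1), ∀ j : Fin n,
      BN.repr (φ (BM (Sum.inr p))) (Sum.inl j) = 0 := by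
    intro p j
    refine fixed_inl BN sg Fin.castSucc (Fin.castSucc_injective n) hNs hNbs _ ?_ j
    rw [← hφ, hMbs p]
  set d : ℕ → ℕ → k := fun p q =>
    if hp : p < m + 1 then if hq : q < n + 1 then
      BN.repr (φ (BM (Sum.inr ⟨p, hp⟩))) (Sum.inr ⟨q, hq⟩) else 0 else 0 with hd
  have R3 : ∀ p, p < m → d p n = 0 := by
    intro p hp
    have hp' : p < m + 1 := by omega
    have hn' : n < n + 1 := by omega
    rw [hd]
    simp only
    rw [dif_pos hp', dif_pos hn']
    have he : (⟨p, hp'⟩ : Fin (m + 1)) = (⟨p, hp⟩ : Fin m).castSucc := rfl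
    rw [he, key1, repr_sum_apply]
    refine Finset.sum_eq_zero fun j _ => ?_
    rw [if_neg]
    intro h
    have h' := congrArg Fin.val h
    simp only [Fin.coe_castSucc] at h'
    have := j.isLt
    omega
  have R2 : ∀ p, p < m → d (p + 1) 0 = 0 := by
    intro p hp
    have hp' : p + 1 < m + 1 := by omega
    have h0' : 0 < n + 1 := by omega
    rw [hd]
    simp only
    rw [dif_pos hp', dif_pos h0']
    have he : (⟨p + 1, hp'⟩ : Fin (m + 1)) = (⟨p, hp⟩ : Fin m).succ := rfl
    rw [he, key2, repr_sum_apply]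
    refine Finset.sum_eq_zero fun j _ => ?_
    rw [if_neg]
    intro h
    have h' := congrArg Fin.val h
    simp only [Fin.val_succ] at h'
    omega
  have R1 : ∀ p q, p < m → q < n → d (p + 1) (q + 1) = d p q := by
    intro p q hp hq
    have hp1 : p + 1 < m + 1 := by omega
    have hq1 : q + 1 < n + 1 := by omega
    have hp' : p < m + 1 := by omega
    have hq' : q < n + 1 := by omega
    rw [hd]
    simp only
    rw [dif_pos hp1, dif_pos hq1, dif_pos hp', dif_pos hq']
    have he1 : (⟨p + 1, hp1⟩ : Fin (m + 1)) = (⟨p, hp⟩ : Fin m).succ := rfl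
    have he2 : (⟨q + 1, hq1⟩ : Fin (n + 1)) = (⟨q, hq⟩ : Fin n).succ := rfl
    have he3 : (⟨p, hp'⟩ : Fin (m + 1)) = (⟨p, hp⟩ : Fin m).castSucc := rfl
    have he4 : (⟨q, hq'⟩ : Fin (n + 1)) = (⟨q, hq⟩ : Fin n).castSucc := rfl
    rw [he1, he2, key2, repr_sum_apply, he3, he4, key1, repr_sum_apply]
    rw [sum_ite_inj _ Fin.succ (Fin.succ_injective n) ⟨q, hq⟩,
      sum_ite_inj _ Fin.castSucc (Fin.castSucc_injective n) ⟨q, hq⟩]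
  have up : ∀ t p q, p + t ≤ m → q + t ≤ n → d (p + t) (q + t) = d p q := by
    intro t
    induction t with
    | zero => intro p q _ _; rfl
    | succ s ih =>
      intro p q hp hq
      rw [show p + (s + 1) = (p + s) + 1 from by omega,
        show q + (s + 1) = (q + s) + 1 from by omega,
        R1 _ _ (by omega) (by omega), ih p q (by omega) (by omega)]
  have dzero : ∀ p q, p ≤ m → q ≤ n → d p q = 0 := by
    intro p q hp hq
    rcases le_or_gt p q with h | h
    · have hu := up (n - q) p q (by omega) (by omega)
      rw [show q + (n - q) = n from by omega] at hu
      rw [← hu]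
      exact R3 _ (by omega)
    · have hu := up q (p - q) 0 (by omega) (by omega)
      rw [show p - q + q = p from by omega, show 0 + q = q from by omega] at hu
      rw [hu, show p - q = (p - q - 1) + 1 from by omega]
      exact R2 _ (by omega)
  have hφb : ∀ p : Fin (m + 1), φ (BM (Sum.inr p)) = 0 := by
    intro p
    have hrepr : BN.repr (φ (BM (Sum.inr p))) = 0 := by
      apply Finsupp.ext
      intro x
      rw [Finsupp.coe_zero, Pi.zero_apply]
      cases x with
      | inl j => exact keyfix p j
      | inr q =>
        have h := dzero p.val q.val (by omega) (by omega)
        rw [hd] at h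
        simp only at h
        rw [dif_pos (by omega : p.val < m + 1), dif_pos (by omega : q.val < n + 1)] at h
        simpa using h
    exact (LinearEquiv.map_eq_zero_iff BN.repr).mp hrepr
  intro v hv
  have hvl : ∀ i : Fin m, BM.repr v (Sum.inl i) = 0 := fun i =>
    fixed_inl BM sg Fin.castSucc (Fin.castSucc_injective m) hMs hMbs v (hv sg) i
  calc φ v = φ (∑ x, BM.repr v x • BM x) := by rw [BM.sum_repr]
    _ = ∑ x, BM.repr v x • φ (BM x) := by rw [map_sum]; simp only [map_smul]
    _ = 0 := by
        rw [Fintype.sum_sum_type]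
        simp [hvl, hφb]
end

section
/- Let l > m > n ≥ 0, let ψ : V_{−(2l+1)} → V_{−(2m+1)} and φ : V_{−(2m+1)} → V_{−(2n+1)} be kG-module homomorphisms. Then the composition φ ∘ ψ is the zero map. -/
set_option linter.unusedSectionVars false

lemma sum_if_unique {k : Type} [Field k] {ι : Type} [Fintype ι] [DecidableEq ι]
    (v : ι → k) (cond : ι → Prop) [DecidablePred cond] (p0 : ι)
    (h : ∀ p, cond p ↔ p = p0) :
    (∑ p, if cond p then v p else 0) = v p0 := by
  simp_rw [h]; simp [Finset.sum_ite_eq']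

lemma sum_if_none {k : Type} [Field k] {ι : Type} [Fintype ι]
    (v : ι → k) (cond : ι → Prop) [DecidablePred cond]
    (h : ∀ p, ¬ cond p) :
    (∑ p, if cond p then v p else 0) = 0 :=
  Finset.sum_eq_zero fun p _ => if_neg (h p)

section Aux

variable {k : Type} [Field k]
variable {m : ℕ} {M : Type} [AddCommGroup M] [Module k M]
  [DistribMulAction K4 M] [SMulCommClass K4 k M]

/-- The action of `g - 1` as a `k`-linear map. -/
noncomputable def Xmap (g : K4) : M →ₗ[k] M :=
  DistribMulAction.toLinearMap k M g - LinearMap.id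

lemma Xmap_apply (g : K4) (v : M) : Xmap (k := k) g v = g • v - v := rfl

lemma Xmap_inl (BM : Module.Basis (Fin m ⊕ Fin (m + 1)) k M) (hM : IsVneg k m M BM) (i : Fin m) :
    Xmap (k := k) sg (BM (Sum.inl i)) = BM (Sum.inr i.castSucc) := by
  rw [Xmap_apply, hM.1 i]; abel

lemma Ymap_inl (BM : Module.Basis (Fin m ⊕ Fin (m + 1)) k M) (hM : IsVneg k m M BM) (i : Fin m) :
    Xmap (k := k) tg (BM (Sum.inl i)) = BM (Sum.inr i.succ) := by
  rw [Xmap_apply, hM.2.1 i]; abel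

lemma Xmap_inr (BM : Module.Basis (Fin m ⊕ Fin (m + 1)) k M) (hM : IsVneg k m M BM) (j : Fin (m+1)) :
    Xmap (k := k) sg (BM (Sum.inr j)) = 0 := by
  rw [Xmap_apply, hM.2.2.1 j]; abel

lemma Ymap_inr (BM : Module.Basis (Fin m ⊕ Fin (m + 1)) k M) (hM : IsVneg k m M BM) (j : Fin (m+1)) :
    Xmap (k := k) tg (BM (Sum.inr j)) = 0 := by
  rw [Xmap_apply, hM.2.2.2 j]; abel

/-- `X v = ∑ (coeff of v on aₚ) • b_{p}` -/
lemma Xmap_eq (BM : Module.Basis (Fin m ⊕ Fin (m + 1)) k M) (hM : IsVneg k m M BM) (v : M) :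
    Xmap (k := k) sg v = ∑ p : Fin m, BM.repr v (Sum.inl p) • BM (Sum.inr p.castSucc) := by
  have h : Xmap (k := k) sg
      = ∑ p : Fin m, (BM.coord (Sum.inl p)).smulRight (BM (Sum.inr p.castSucc)) := by
    apply BM.ext
    rintro (i | j)
    · rw [Xmap_inl BM hM]
      simp [Module.Basis.coord_apply, Finsupp.single_apply, Finset.sum_ite_eq']
    · rw [Xmap_inr BM hM]
      simp [Module.Basis.coord_apply, Finsupp.single_apply]
  rw [h]; simp [Module.Basis.coord_apply]

lemma Ymap_eq (BM : Module.Basis (Fin m ⊕ Fin (m + 1)) k M) (hM : IsVneg k m M BM) (v : M) :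
    Xmap (k := k) tg v = ∑ p : Fin m, BM.repr v (Sum.inl p) • BM (Sum.inr p.succ) := by
  have h : Xmap (k := k) tg
      = ∑ p : Fin m, (BM.coord (Sum.inl p)).smulRight (BM (Sum.inr p.succ)) := by
    apply BM.ext
    rintro (i | j)
    · rw [Ymap_inl BM hM]
      simp [Module.Basis.coord_apply, Finsupp.single_apply, Finset.sum_ite_eq']
    · rw [Ymap_inr BM hM]
      simp [Module.Basis.coord_apply, Finsupp.single_apply]
  rw [h]; simp [Module.Basis.coord_apply]

lemma coeff_of_sum (BM : Module.Basis (Fin m ⊕ Fin (m + 1)) k M) (c : Fin m → k)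
    (f : Fin m → Fin (m + 1)) (q : Fin (m + 1)) :
    BM.repr (∑ p : Fin m, c p • BM (Sum.inr (f p))) (Sum.inr q)
      = ∑ p : Fin m, if f p = q then c p else 0 := by
  simp only [map_sum, map_smul, Module.Basis.repr_self, Finsupp.coe_finset_sum, Finset.sum_apply,
    Finsupp.coe_smul, Pi.smul_apply, Finsupp.single_apply, smul_eq_mul, Sum.inr.injEq]
  exact Finset.sum_congr rfl fun p _ => by split <;> simp

end Aux

section Key

variable {k : Type} [Field k]
variable {l m : ℕ} {L M : Type} [AddCommGroup L] [Module k L]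
  [DistribMulAction K4 L] [SMulCommClass K4 k L]
  [AddCommGroup M] [Module k M] [DistribMulAction K4 M] [SMulCommClass K4 k M]

lemma psi_Xmap (ψ : L →ₗ[k] M) (hψ : ∀ (g : K4) (v : L), ψ (g • v) = g • ψ v)
    (g : K4) (v : L) : ψ (Xmap (k := k) g v) = Xmap (k := k) g (ψ v) := by
  simp [Xmap_apply, map_sub, hψ]

/-- Key lemma: a homomorphism `V_{-(2l+1)} → V_{-(2m+1)}` with `l > m` kills the `a`-part. -/
lemma key (hlm : m < l)
    (BL : Module.Basis (Fin l ⊕ Fin (l + 1)) k L) (hL : IsVneg k l L BL)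
    (BM : Module.Basis (Fin m ⊕ Fin (m + 1)) k M) (hM : IsVneg k m M BM)
    (ψ : L →ₗ[k] M) (hψ : ∀ (g : K4) (v : L), ψ (g • v) = g • ψ v)
    (i : Fin l) (p : Fin m) : BM.repr (ψ (BL (Sum.inl i))) (Sum.inl p) = 0 := by
  set c : Fin l → Fin m → k := fun i p => BM.repr (ψ (BL (Sum.inl i))) (Sum.inl p) with hc
  -- values of ψ on b's
  have hX : ∀ i : Fin l, ψ (BL (Sum.inr i.castSucc))
      = ∑ p : Fin m, c i p • BM (Sum.inr p.castSucc) := by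
    intro i
    rw [← Xmap_inl BL hL i, psi_Xmap ψ hψ, Xmap_eq BM hM]
  have hY : ∀ i : Fin l, ψ (BL (Sum.inr i.succ))
      = ∑ p : Fin m, c i p • BM (Sum.inr p.succ) := by
    intro i
    rw [← Ymap_inl BL hL i, psi_Xmap ψ hψ, Ymap_eq BM hM]
  -- the matching equation on coefficients
  have match_eq : ∀ (i i' : Fin l), (i : ℕ) + 1 = (i' : ℕ) → ∀ q : Fin (m + 1),
      (∑ p : Fin m, if p.succ = q then c i p else 0)
        = ∑ p : Fin m, if p.castSucc = q then c i' p else 0 := by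
    intro i i' hii q
    have hbb : (i.succ : Fin (l+1)) = i'.castSucc := by
      ext; simp [hii]
    have heq : ψ (BL (Sum.inr i.succ)) = ψ (BL (Sum.inr i'.castSucc)) := by rw [hbb]
    rw [hX, hY] at heq
    have h2 := congrArg (fun v => BM.repr v (Sum.inr q)) heq
    simpa only [coeff_of_sum] using h2
  -- boundary and recurrence, in ℕ-indexed form
  have hm1 : 1 ≤ m := Nat.one_le_iff_ne_zero.mpr (by rintro rfl; exact absurd p.2 (by simp))
  set Cn : ℕ → ℕ → k := fun i p => if h : i < l ∧ p < m then c ⟨i, h.1⟩ ⟨p, h.2⟩ else 0 with hCn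
  have hCn_eq : ∀ (i p : ℕ) (hi : i < l) (hp : p < m), Cn i p = c ⟨i, hi⟩ ⟨p, hp⟩ := by
    intro i p hi hp; simp [hCn, hi, hp]
  have F2 : ∀ i : ℕ, 0 < i → i < l → Cn i 0 = 0 := by
    intro i hi0 hil
    have h := match_eq ⟨i - 1, by omega⟩ ⟨i, hil⟩ (by simp; omega) ⟨0, by omega⟩
    rw [sum_if_none _ _ (by
        intro p' hp'
        have := congrArg Fin.val hp'; simp at this),
      sum_if_unique (fun p' => c ⟨i, hil⟩ p') _ (⟨0, by omega⟩ : Fin m) (by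
        intro p'
        rw [Fin.ext_iff, Fin.ext_iff]
        simp)] at h
    rw [hCn_eq i 0 hil (by omega), ← h]
  have F3 : ∀ i : ℕ, i + 1 < l → Cn i (m - 1) = 0 := by
    intro i hil
    have h := match_eq ⟨i, by omega⟩ ⟨i + 1, hil⟩ (by simp) ⟨m, by omega⟩
    rw [sum_if_none (fun p' => c ⟨i+1, hil⟩ p') _ (by
        intro p' hp'
        have := congrArg Fin.val hp'; simp at this; omega),
      sum_if_unique (fun p' => c ⟨i, by omega⟩ p') _ (⟨m - 1, by omega⟩ : Fin m) (by
        intro p'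
        rw [Fin.ext_iff, Fin.ext_iff]
        simp; omega)] at h
    rw [hCn_eq i (m - 1) (by omega) (by omega), h]
  have F1 : ∀ i p : ℕ, i + 1 < l → p + 1 < m → Cn i p = Cn (i+1) (p+1) := by
    intro i p hil hpm
    have h := match_eq ⟨i, by omega⟩ ⟨i + 1, hil⟩ (by simp) ⟨p + 1, by omega⟩
    rw [sum_if_unique (fun p' => c ⟨i, by omega⟩ p') _ (⟨p, by omega⟩ : Fin m) (by
        intro p'
        rw [Fin.ext_iff, Fin.ext_iff]
        simp),
      sum_if_unique (fun p' => c ⟨i+1, hil⟩ p') _ (⟨p + 1, hpm⟩ : Fin m) (by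
        intro p'
        rw [Fin.ext_iff, Fin.ext_iff]
        simp)] at h
    rw [hCn_eq i p (by omega) (by omega), hCn_eq (i+1) (p+1) hil hpm]
    exact h
  have F4 : ∀ t i p : ℕ, i + t < l → p + t < m → Cn i p = Cn (i + t) (p + t) := by
    intro t
    induction t with
    | zero => intro i p _ _; simp
    | succ t ih =>
      intro i p hil hpm
      rw [ih i p (by omega) (by omega), F1 (i+t) (p+t) (by omega) (by omega), Nat.add_assoc, Nat.add_assoc]
  -- finish
  have hfin : Cn i.1 p.1 = 0 := by
    rcases lt_or_ge (p : ℕ) (i : ℕ) with h | h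
    · have h4 := F4 p.1 (i.1 - p.1) 0 (by omega) (by omega)
      rw [show i.1 - p.1 + p.1 = i.1 by omega, show 0 + p.1 = p.1 by omega] at h4
      rw [← h4]
      exact F2 _ (by omega) (by omega)
    · have h4 := F4 (m - 1 - p.1) i.1 p.1 (by omega) (by omega)
      rw [show p.1 + (m - 1 - p.1) = m - 1 by omega] at h4
      rw [h4]
      exact F3 _ (by omega)
  rw [hCn_eq i.1 p.1 i.2 p.2] at hfin
  simpa using hfin



/-- A homomorphism `V_{-(2l+1)} → V_{-(2m+1)}` with `l > m` kills all the `b`'s. -/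
lemma hom_b_zero (hlm : m < l)
    (BL : Module.Basis (Fin l ⊕ Fin (l + 1)) k L) (hL : IsVneg k l L BL)
    (BM : Module.Basis (Fin m ⊕ Fin (m + 1)) k M) (hM : IsVneg k m M BM)
    (ψ : L →ₗ[k] M) (hψ : ∀ (g : K4) (v : L), ψ (g • v) = g • ψ v)
    (j : Fin (l + 1)) : ψ (BL (Sum.inr j)) = 0 := by
  rcases lt_or_ge j.1 l with h | h
  · have hj : j = (⟨j.1, h⟩ : Fin l).castSucc := by ext; simp
    rw [hj, ← Xmap_inl BL hL, psi_Xmap ψ hψ, Xmap_eq BM hM]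
    apply Finset.sum_eq_zero
    intro p _
    rw [key hlm BL hL BM hM ψ hψ, zero_smul]
  · have hl1 : 0 < l := lt_of_le_of_lt (Nat.zero_le m) hlm
    have hj : j = (⟨l - 1, by omega⟩ : Fin l).succ := by
      ext; simp; omega
    rw [hj, ← Ymap_inl BL hL, psi_Xmap ψ hψ, Ymap_eq BM hM]
    apply Finset.sum_eq_zero
    intro p _
    rw [key hlm BL hL BM hM ψ hψ, zero_smul]

end Key

theorem stmt3' (k : Type) [Field k] [CharP k 2] (l m n : ℕ) (hlm : m < l) (hmn : n < m)
    (L : Type) [AddCommGroup L] [Module k L] [DistribMulAction K4 L] [SMulCommClass K4 k L]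
    (M : Type) [AddCommGroup M] [Module k M] [DistribMulAction K4 M] [SMulCommClass K4 k M]
    (N : Type) [AddCommGroup N] [Module k N] [DistribMulAction K4 N] [SMulCommClass K4 k N]
    (BL : Module.Basis (Fin l ⊕ Fin (l + 1)) k L) (hL : IsVneg k l L BL)
    (BM : Module.Basis (Fin m ⊕ Fin (m + 1)) k M) (hM : IsVneg k m M BM)
    (BN : Module.Basis (Fin n ⊕ Fin (n + 1)) k N) (hN : IsVneg k n N BN)
    (ψ : L →ₗ[k] M) (hψ : ∀ (g : K4) (v : L), ψ (g • v) = g • ψ v)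
    (φ : M →ₗ[k] N) (hφ : ∀ (g : K4) (v : M), φ (g • v) = g • φ v) :
    ∀ x : L, φ (ψ x) = 0 := by
  have hbasis : ∀ s : Fin l ⊕ Fin (l + 1), φ (ψ (BL s)) = 0 := by
    rintro (i | j)
    · -- ψ (a_i) is a combination of b's of M, and φ kills all b's of M
      conv_lhs => rw [← BM.sum_repr (ψ (BL (Sum.inl i)))]
      rw [map_sum, Fintype.sum_sum_type]
      rw [Finset.sum_eq_zero (fun p _ => by
            rw [key hlm BL hL BM hM ψ hψ, zero_smul, map_zero]),
          Finset.sum_eq_zero (fun q _ => by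
            rw [map_smul, hom_b_zero hmn BM hM BN hN φ hφ q, smul_zero]),
          add_zero]
    · rw [hom_b_zero hlm BL hL BM hM ψ hψ j, map_zero]
  intro x
  conv_lhs => rw [← BL.sum_repr x]
  rw [map_sum, map_sum]
  apply Finset.sum_eq_zero
  intro s _
  rw [map_smul, map_smul, hbasis s, smul_zero]

/-- Let `l > m > n ≥ 0` and let `ψ : V_{-(2l+1)} → V_{-(2m+1)}` and
`φ : V_{-(2m+1)} → V_{-(2n+1)}` be `kG`-module homomorphisms. Then `φ ∘ ψ = 0`. -/


theorem stmt3 (k : Type) [Field k] [CharP k 2] (l m n : ℕ) (hlm : m < l) (hmn : n < m)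
    (L : Type) [AddCommGroup L] [Module k L] [DistribMulAction K4 L] [SMulCommClass K4 k L]
    (M : Type) [AddCommGroup M] [Module k M] [DistribMulAction K4 M] [SMulCommClass K4 k M]
    (N : Type) [AddCommGroup N] [Module k N] [DistribMulAction K4 N] [SMulCommClass K4 k N]
    (BL : Module.Basis (Fin l ⊕ Fin (l + 1)) k L) (hL : IsVneg k l L BL)
    (BM : Module.Basis (Fin m ⊕ Fin (m + 1)) k M) (hM : IsVneg k m M BM)
    (BN : Module.Basis (Fin n ⊕ Fin (n + 1)) k N) (hN : IsVneg k n N BN)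
    (ψ : L →ₗ[k] M) (hψ : ∀ (g : K4) (v : L), ψ (g • v) = g • ψ v)
    (φ : M →ₗ[k] N) (hφ : ∀ (g : K4) (v : M), φ (g • v) = g • φ v) :
    ∀ x : L, φ (ψ x) = 0 :=
  stmt3' k l m n hlm hmn L M N BL hL BM hM BN hN ψ hψ φ hφ
end

section
/- For every n ≥ 0, the sum over i = 1, 2, 3 of the images of the relative trace maps Tr^G_{Hᵢ} : (V_{−(2n+1)})^{Hᵢ} → (V_{−(2n+1)})^G is the zero subspace. -/
/-- The relative trace map `Tr^G_H : M^H → M^G`, `Tr^G_H(x) = Σ_{g ∈ S} g • x`, where the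
sum runs over the set `S` of representatives (`Quotient.out`) of the left cosets of `H`
in `G` (a left transversal). -/
noncomputable def relTr (H : Subgroup K4) {V : Type} [AddCommMonoid V] [SMul K4 V]
    (v : V) : V :=
  ∑ᶠ c : K4 ⧸ H, Quotient.out c • v

section Aux
set_option linter.unusedSectionVars false

variable {k : Type} [Field k] {n : ℕ} {V : Type} [AddCommGroup V]
  [Module k V] [DistribMulAction K4 V] [SMulCommClass K4 k V]

/-- The linear map sending `aᵢ ↦ b_{i-1}` (i.e. `a_{i+1} ↦ bᵢ` in 0-indexing) and `bⱼ ↦ 0`. -/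
private noncomputable def Lc (B : Module.Basis (Fin n ⊕ Fin (n + 1)) k V) : V →ₗ[k] V :=
  B.constr k (Sum.elim (fun i => B (Sum.inr i.castSucc)) 0)

/-- The linear map sending `aᵢ ↦ bᵢ` and `bⱼ ↦ 0`. -/
private noncomputable def Ls (B : Module.Basis (Fin n ⊕ Fin (n + 1)) k V) : V →ₗ[k] V :=
  B.constr k (Sum.elim (fun i => B (Sum.inr i.succ)) 0)

private lemma sg_smul_eq (B : Module.Basis (Fin n ⊕ Fin (n + 1)) k V) (hV : IsVneg k n V B) (v : V) :
    sg • v = v + Lc B v := by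
  have h : DistribSMul.toLinearMap k V sg = LinearMap.id + Lc B := by
    apply B.ext
    rintro (i | j)
    · simp [Lc, hV.1 i]
    · simp [Lc, hV.2.2.1 j]
  simpa using LinearMap.congr_fun h v

private lemma tg_smul_eq (B : Module.Basis (Fin n ⊕ Fin (n + 1)) k V) (hV : IsVneg k n V B) (v : V) :
    tg • v = v + Ls B v := by
  have h : DistribSMul.toLinearMap k V tg = LinearMap.id + Ls B := by
    apply B.ext
    rintro (i | j)
    · simp [Ls, hV.2.1 i]
    · simp [Ls, hV.2.2.2 j]
  simpa using LinearMap.congr_fun h v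

private noncomputable def Tup (B : Module.Basis (Fin n ⊕ Fin (n + 1)) k V) : V →ₗ[k] V :=
  B.constr k (Sum.elim 0 (fun j => if h : (j : ℕ) < n then
    B (Sum.inr ⟨(j : ℕ) + 1, by omega⟩) else 0))

private noncomputable def Tdown (B : Module.Basis (Fin n ⊕ Fin (n + 1)) k V) : V →ₗ[k] V :=
  B.constr k (Sum.elim 0 (fun j => if h : 0 < (j : ℕ) then
    B (Sum.inr ⟨(j : ℕ) - 1, by omega⟩) else 0))

private lemma Tup_comp (B : Module.Basis (Fin n ⊕ Fin (n + 1)) k V) :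
    (Tup B).comp (Lc B) = Ls B := by
  apply B.ext
  rintro (i | j)
  · simp only [LinearMap.comp_apply, Lc, Ls, Tup, Module.Basis.constr_basis, Sum.elim_inl]
    simp only [Sum.elim_inr, Fin.coe_castSucc, i.isLt, dif_pos]
    congr 1
  · simp [Lc, Ls, Tup]

private lemma Tdown_comp (B : Module.Basis (Fin n ⊕ Fin (n + 1)) k V) :
    (Tdown B).comp (Ls B) = Lc B := by
  apply B.ext
  rintro (i | j)
  · simp only [LinearMap.comp_apply, Lc, Ls, Tdown, Module.Basis.constr_basis, Sum.elim_inl]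
    simp only [Sum.elim_inr, Fin.val_succ, Nat.succ_pos, dif_pos]
    congr 1
  · simp [Lc, Ls, Tdown]

private lemma Lc_comp_Ls (B : Module.Basis (Fin n ⊕ Fin (n + 1)) k V) :
    (Lc B).comp (Ls B) = 0 := by
  apply B.ext
  rintro (i | j) <;> simp [Lc, Ls]

private noncomputable def Sm (B : Module.Basis (Fin n ⊕ Fin (n + 1)) k V) : V →ₗ[k] V :=
  B.constr k (Sum.elim 0 (fun j => ∑ l ∈ Finset.Iic j, B (Sum.inr l)))

private lemma Sm_comp [CharP k 2] (B : Module.Basis (Fin n ⊕ Fin (n + 1)) k V) :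
    (Sm B).comp (Lc B + Ls B) = Ls B := by
  have htwo : ∀ x : V, x + x = 0 := by
    intro x
    rw [← two_smul k x, CharTwo.two_eq_zero, zero_smul]
  apply B.ext
  rintro (i | j)
  · simp only [LinearMap.comp_apply, LinearMap.add_apply, Lc, Ls, Sm, Module.Basis.constr_basis,
      Sum.elim_inl, map_add, Sum.elim_inr]
    have hins : Finset.Iic i.succ = insert i.succ (Finset.Iic i.castSucc) := by
      ext l
      simp only [Finset.mem_Iic, Finset.mem_insert, Fin.le_def, Fin.ext_iff, Fin.val_succ,
        Fin.coe_castSucc]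
      omega
    have hnot : i.succ ∉ Finset.Iic i.castSucc := by
      simp [Finset.mem_Iic, Fin.le_def]
    rw [hins, Finset.sum_insert hnot, add_left_comm, htwo, add_zero]
  · simp [Lc, Ls, Sm]

private lemma fixed_by_all {v : V} (hσ : sg • v = v) (hτ : tg • v = v) :
    ∀ g : K4, g • v = v := by
  have hcases : ∀ g : K4, g = 1 ∨ g = sg ∨ g = tg ∨ g = sg * tg := by decide
  intro g
  rcases hcases g with h | h | h | h <;> subst h
  · exact one_smul _ v
  · exact hσ
  · exact hτ
  · rw [mul_smul, hτ, hσ]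

private lemma relTr_eq_zero [CharP k 2] (H : Subgroup K4) (hcard : Nat.card H = 2)
    {v : V} (hfix : ∀ g : K4, g • v = v) : relTr H v = 0 := by
  have htwo : v + v = 0 := by
    rw [← two_smul k v, CharTwo.two_eq_zero, zero_smul]
  have : Fintype (K4 ⧸ H) := Fintype.ofFinite _
  have hidx : H.index = 2 := by
    have h1 := Subgroup.card_mul_index H
    have h2 : Nat.card K4 = 4 := by
      rw [Nat.card_eq_fintype_card]; decide
    rw [hcard, h2] at h1
    omega
  have hq : Fintype.card (K4 ⧸ H) = 2 := by
    rw [← Nat.card_eq_fintype_card, ← Subgroup.index_eq_card, hidx]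
  unfold relTr
  rw [finsum_eq_sum_of_fintype]
  calc ∑ c : K4 ⧸ H, Quotient.out c • v = ∑ _c : K4 ⧸ H, v :=
        Finset.sum_congr rfl (fun c _ => hfix _)
    _ = Fintype.card (K4 ⧸ H) • v := by rw [Finset.sum_const, Finset.card_univ]
    _ = 0 := by rw [hq, two_nsmul, htwo]

private lemma card_two {g : K4} (h1 : g ^ 2 = 1) (h2 : g ≠ 1) :
    Nat.card (Subgroup.zpowers g) = 2 := by
  rw [Nat.card_zpowers]
  exact orderOf_eq_prime h1 h2

end Aux

/-- For every `n ≥ 0`, the sum over `i = 1, 2, 3` of the images of the relative trace maps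
`Tr^G_{Hᵢ} : (V_{-(2n+1)})^{Hᵢ} → (V_{-(2n+1)})^G` is the zero subspace. -/
theorem stmt5 (k : Type) [Field k] [CharP k 2] (n : ℕ)
    (V : Type) [AddCommGroup V] [Module k V] [DistribMulAction K4 V] [SMulCommClass K4 k V]
    (B : Module.Basis (Fin n ⊕ Fin (n + 1)) k V) (hV : IsVneg k n V B) :
    Submodule.span k
      ((fun v : V => relTr H1 v) '' {v : V | ∀ h ∈ H1, h • v = v} ∪
        (fun v : V => relTr H2 v) '' {v : V | ∀ h ∈ H2, h • v = v} ∪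
        (fun v : V => relTr H3 v) '' {v : V | ∀ h ∈ H3, h • v = v}) = ⊥ := by
  rw [Submodule.span_eq_bot]
  intro x hx
  have key : ∀ v : V, sg • v = v → tg • v = v → ∀ H : Subgroup K4,
      Nat.card H = 2 → relTr H v = (0 : V) := fun v hσ hτ H hc =>
    relTr_eq_zero (k := k) H hc (fixed_by_all hσ hτ)
  have cardH1 : Nat.card H1 = 2 := card_two (by decide) (by decide)
  have cardH2 : Nat.card H2 = 2 := card_two (by decide) (by decide)
  have cardH3 : Nat.card H3 = 2 := card_two (by decide) (by decide)
  rcases hx with (⟨v, hv, rfl⟩ | ⟨v, hv, rfl⟩) | ⟨v, hv, rfl⟩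
  · -- H1 : v is fixed by sg
    have hσ : sg • v = v := hv sg (Subgroup.mem_zpowers sg)
    have hLc : Lc B v = 0 := by
      have := (sg_smul_eq B hV v).symm.trans hσ
      exact (add_eq_left).mp this
    have hLs : Ls B v = 0 := by
      have h := LinearMap.congr_fun (Tup_comp B) v
      rw [LinearMap.comp_apply, hLc, map_zero] at h
      exact h.symm
    have hτ : tg • v = v := by rw [tg_smul_eq B hV v, hLs, add_zero]
    exact key v hσ hτ H1 cardH1
  · -- H2 : v is fixed by tg
    have hτ : tg • v = v := hv tg (Subgroup.mem_zpowers tg)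
    have hLs : Ls B v = 0 := by
      have := (tg_smul_eq B hV v).symm.trans hτ
      exact (add_eq_left).mp this
    have hLc : Lc B v = 0 := by
      have h := LinearMap.congr_fun (Tdown_comp B) v
      rw [LinearMap.comp_apply, hLs, map_zero] at h
      exact h.symm
    have hσ : sg • v = v := by rw [sg_smul_eq B hV v, hLc, add_zero]
    exact key v hσ hτ H2 cardH2
  · -- H3 : v is fixed by sg * tg
    have hστ : (sg * tg) • v = v := hv (sg * tg) (Subgroup.mem_zpowers _)
    have hsum : Lc B v + Ls B v = 0 := by
      have h1 : (sg * tg) • v = v + (Lc B v + Ls B v) := by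
        rw [mul_smul, tg_smul_eq B hV v, smul_add, sg_smul_eq B hV v,
          sg_smul_eq B hV (Ls B v)]
        have h0 : Lc B (Ls B v) = 0 := by
          have := LinearMap.congr_fun (Lc_comp_Ls B) v
          simpa using this
        rw [h0, add_zero]
        abel
      have := h1.symm.trans hστ
      exact (add_eq_left).mp this
    have hLs : Ls B v = 0 := by
      have h := LinearMap.congr_fun (Sm_comp B) v
      rw [LinearMap.comp_apply, LinearMap.add_apply, hsum, map_zero] at h
      exact h.symm
    have hLc : Lc B v = 0 := by rw [hLs, add_zero] at hsum; exact hsum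
    have hσ : sg • v = v := by rw [sg_smul_eq B hV v, hLc, add_zero]
    have hτ : tg • v = v := by rw [tg_smul_eq B hV v, hLs, add_zero]
    exact key v hσ hτ H3 cardH3
end

section
/- There exists a surjective kG-module homomorphism π : Q_σ ⊕ Q_τ ⊕ Q_{στ} → V₃ which splits on restriction to each of the subgroups H₁, H₂, H₃, and whose kernel is isomorphic as a kG-module to V_{−3}. -/
/-- `V` carries the structure of the module `V_{2n+1}`: the basis vector `B (Sum.inl j)`
is `a_j` (for `0 ≤ j ≤ n`) and `B (Sum.inr i)` is `b_{i+1}` (for `0 ≤ i ≤ n-1`), with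
`X·aᵢ = bᵢ` (`1 ≤ i ≤ n`), `Y·aᵢ = b_{i+1}` (`0 ≤ i ≤ n-1`), `X·a₀ = Y·aₙ = 0` and
`X·bⱼ = Y·bⱼ = 0`, i.e. (with `σ = 1 + X`, `τ = 1 + Y`) `σ·aᵢ = aᵢ + bᵢ` for `i ≥ 1`,
`σ·a₀ = a₀`, `τ·aᵢ = aᵢ + b_{i+1}` for `i ≤ n-1`, `τ·aₙ = aₙ`, and `σ, τ` fix the `bⱼ`. -/
def IsVpos (k : Type) [Field k] (n : ℕ) (V : Type) [AddCommGroup V] [Module k V]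
    [DistribMulAction K4 V] (B : Module.Basis (Fin (n + 1) ⊕ Fin n) k V) : Prop :=
  (sg • B (Sum.inl 0) = B (Sum.inl 0)) ∧
  (∀ i : Fin n, sg • B (Sum.inl i.succ) = B (Sum.inl i.succ) + B (Sum.inr i)) ∧
  (∀ i : Fin n, tg • B (Sum.inl i.castSucc) = B (Sum.inl i.castSucc) + B (Sum.inr i)) ∧
  (tg • B (Sum.inl (Fin.last n)) = B (Sum.inl (Fin.last n))) ∧
  (∀ j : Fin n, sg • B (Sum.inr j) = B (Sum.inr j)) ∧
  (∀ j : Fin n, tg • B (Sum.inr j) = B (Sum.inr j))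

/-- `V` carries the structure of the module `Q_σ`: basis `r = B 0`, `s = B 1` with
`Y·r = s`, `X·r = X·s = Y·s = 0` (so `σ` acts trivially). -/
def IsQsig (k : Type) [Field k] (V : Type) [AddCommGroup V] [Module k V]
    [DistribMulAction K4 V] (B : Module.Basis (Fin 2) k V) : Prop :=
  (sg • B 0 = B 0) ∧ (tg • B 0 = B 0 + B 1) ∧ (sg • B 1 = B 1) ∧ (tg • B 1 = B 1)

/-- `V` carries the structure of the module `Q_τ`: basis `r = B 0`, `s = B 1` with
`X·r = s`, `Y·r = X·s = Y·s = 0` (so `τ` acts trivially). -/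
def IsQtau (k : Type) [Field k] (V : Type) [AddCommGroup V] [Module k V]
    [DistribMulAction K4 V] (B : Module.Basis (Fin 2) k V) : Prop :=
  (sg • B 0 = B 0 + B 1) ∧ (tg • B 0 = B 0) ∧ (sg • B 1 = B 1) ∧ (tg • B 1 = B 1)

/-- `V` carries the structure of the module `Q_{στ}`: basis `r = B 0`, `s = B 1` with
`X·r = Y·r = s`, `X·s = Y·s = 0` (so `στ` acts trivially). -/
def IsQst (k : Type) [Field k] (V : Type) [AddCommGroup V] [Module k V]
    [DistribMulAction K4 V] (B : Module.Basis (Fin 2) k V) : Prop :=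
  (sg • B 0 = B 0 + B 1) ∧ (tg • B 0 = B 0 + B 1) ∧ (sg • B 1 = B 1) ∧ (tg • B 1 = B 1)

lemma K4_mul_self (g : K4) : g * g = 1 := by revert g; decide

lemma K4_cases (g : K4) : g = 1 ∨ g = sg ∨ g = tg ∨ g = sg * tg := by revert g; decide

lemma K4_zpowers_cases {g h : K4} (hm : h ∈ Subgroup.zpowers g) : h = 1 ∨ h = g := by
  obtain ⟨n, rfl⟩ := Subgroup.mem_zpowers_iff.mp hm
  have h2 : g ^ (2 : ℤ) = 1 := by
    rw [show (2:ℤ) = 1 + 1 by norm_num, zpow_add, zpow_one]; exact K4_mul_self g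
  rcases Int.even_or_odd n with ⟨m, rfl⟩ | ⟨m, rfl⟩
  · left; rw [← two_mul, zpow_mul, h2, one_zpow]
  · right; rw [zpow_add, zpow_mul, h2, one_zpow, zpow_one, one_mul]

lemma char2_add_self (k : Type) [Field k] [CharP k 2] (M : Type) [AddCommGroup M] [Module k M]
    (v : M) : v + v = 0 := by
  have h2 : (2:k) = 0 := by exact_mod_cast CharP.cast_eq_zero k 2
  calc v + v = (2:k) • v := (two_smul k v).symm
  _ = 0 := by rw [h2, zero_smul]

set_option maxHeartbeats 2000000 in
/-- There is a surjective `kG`-homomorphism `π : Q_σ ⊕ Q_τ ⊕ Q_{στ} → V₃` which splits on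
restriction to each of `H₁, H₂, H₃` and whose kernel is isomorphic as a `kG`-module to
`V₋₃`. Here `V₃ = V_{2·1+1}` and `W = V₋₃ = V_{-(2·1+1)}` realizes the kernel via an
injective equivariant map with range `ker π`. -/
theorem stmt8 (k : Type) [Field k] [CharP k 2]
    (V : Type) [AddCommGroup V] [Module k V] [DistribMulAction K4 V] [SMulCommClass K4 k V]
    (B : Module.Basis (Fin 2 ⊕ Fin 1) k V) (hV : IsVpos k 1 V B)
    (Qs : Type) [AddCommGroup Qs] [Module k Qs] [DistribMulAction K4 Qs]
    [SMulCommClass K4 k Qs] (Bs : Module.Basis (Fin 2) k Qs) (hQs : IsQsig k Qs Bs)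
    (Qt : Type) [AddCommGroup Qt] [Module k Qt] [DistribMulAction K4 Qt]
    [SMulCommClass K4 k Qt] (Bt : Module.Basis (Fin 2) k Qt) (hQt : IsQtau k Qt Bt)
    (Qst : Type) [AddCommGroup Qst] [Module k Qst] [DistribMulAction K4 Qst]
    [SMulCommClass K4 k Qst] (Bst : Module.Basis (Fin 2) k Qst) (hQst : IsQst k Qst Bst)
    (W : Type) [AddCommGroup W] [Module k W] [DistribMulAction K4 W] [SMulCommClass K4 k W]
    (BW : Module.Basis (Fin 1 ⊕ Fin 2) k W) (hW : IsVneg k 1 W BW) :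
    ∃ π : (Qs × Qt × Qst) →ₗ[k] V,
      Function.Surjective π ∧
      (∀ (g : K4) (q : Qs × Qt × Qst),
        π (g • q.1, g • q.2.1, g • q.2.2) = g • π q) ∧
      (∀ H ∈ ({H1, H2, H3} : Set (Subgroup K4)),
        ∃ s : V →ₗ[k] (Qs × Qt × Qst),
          (∀ v : V, π (s v) = v) ∧
          (∀ h ∈ H, ∀ v : V, s (h • v) = (h • (s v).1, h • (s v).2.1, h • (s v).2.2))) ∧
      ∃ ι : W →ₗ[k] (Qs × Qt × Qst),
        Function.Injective ι ∧
        (∀ (g : K4) (w : W), ι (g • w) = (g • (ι w).1, g • (ι w).2.1, g • (ι w).2.2)) ∧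
        LinearMap.range ι = LinearMap.ker π := by
  classical
  obtain ⟨hV1, hV2, hV3, hV4, hV5, hV6⟩ := hV
  obtain ⟨hq1, hq2, hq3, hq4⟩ := hQs
  obtain ⟨ht1, ht2, ht3, ht4⟩ := hQt
  obtain ⟨hu1, hu2, hu3, hu4⟩ := hQst
  obtain ⟨hw1, hw2, hw3, hw4⟩ := hW
  have hV2' : sg • B (Sum.inl 1) = B (Sum.inl 1) + B (Sum.inr 0) := by simpa using hV2 0
  have hV3' : tg • B (Sum.inl 0) = B (Sum.inl 0) + B (Sum.inr 0) := by simpa using hV3 0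
  have hV4' : tg • B (Sum.inl 1) = B (Sum.inl 1) := by
    have hl : Fin.last 1 = 1 := rfl
    rwa [hl] at hV4
  have hV5' : sg • B (Sum.inr 0) = B (Sum.inr 0) := hV5 0
  have hV6' : tg • B (Sum.inr 0) = B (Sum.inr 0) := hV6 0
  have hw1' : sg • BW (Sum.inl 0) = BW (Sum.inl 0) + BW (Sum.inr 0) := by simpa using hw1 0
  have hw2' : tg • BW (Sum.inl 0) = BW (Sum.inl 0) + BW (Sum.inr 1) := by simpa using hw2 0
  have hw3a : sg • BW (Sum.inr 0) = BW (Sum.inr 0) := hw3 0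
  have hw3b : sg • BW (Sum.inr 1) = BW (Sum.inr 1) := hw3 1
  have hw4a : tg • BW (Sum.inr 0) = BW (Sum.inr 0) := hw4 0
  have hw4b : tg • BW (Sum.inr 1) = BW (Sum.inr 1) := hw4 1
  have h2V : ∀ v : V, v + v = 0 := char2_add_self k V
  have h2U : ∀ v : Qst, v + v = 0 := char2_add_self k Qst
  -- the map π
  set f1 : Qs →ₗ[k] V := Bs.constr k ![B (Sum.inl 0), B (Sum.inr 0)] with hf1def
  set f2 : Qt →ₗ[k] V := Bt.constr k ![B (Sum.inl 1), B (Sum.inr 0)] with hf2def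
  set f3 : Qst →ₗ[k] V := Bst.constr k ![B (Sum.inl 0) + B (Sum.inl 1), B (Sum.inr 0)] with hf3def
  set π : (Qs × Qt × Qst) →ₗ[k] V :=
    f1 ∘ₗ LinearMap.fst k Qs (Qt × Qst)
    + f2 ∘ₗ (LinearMap.fst k Qt Qst ∘ₗ LinearMap.snd k Qs (Qt × Qst))
    + f3 ∘ₗ (LinearMap.snd k Qt Qst ∘ₗ LinearMap.snd k Qs (Qt × Qst)) with hπdef
  have hπ : ∀ (x : Qs) (y : Qt) (z : Qst), π (x, y, z) = f1 x + f2 y + f3 z := by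
    intro x y z; rw [hπdef]; rfl
  have hf1_0 : f1 (Bs 0) = B (Sum.inl 0) := by rw [hf1def]; simp
  have hf1_1 : f1 (Bs 1) = B (Sum.inr 0) := by rw [hf1def]; simp
  have hf2_0 : f2 (Bt 0) = B (Sum.inl 1) := by rw [hf2def]; simp
  have hf2_1 : f2 (Bt 1) = B (Sum.inr 0) := by rw [hf2def]; simp
  have hf3_0 : f3 (Bst 0) = B (Sum.inl 0) + B (Sum.inl 1) := by rw [hf3def]; simp
  have hf3_1 : f3 (Bst 1) = B (Sum.inr 0) := by rw [hf3def]; simp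
  -- equivariance of the building blocks
  have E1s : ∀ x : Qs, f1 (sg • x) = sg • f1 x := by
    have h : f1 ∘ₗ DistribSMul.toLinearMap k Qs sg
        = DistribSMul.toLinearMap k V sg ∘ₗ f1 := by
      apply Bs.ext; intro i; fin_cases i <;>
        (simp [hf1def, hq1, hq3, hV1, hV5']; try abel)
    intro x; simpa using LinearMap.congr_fun h x
  have E1t : ∀ x : Qs, f1 (tg • x) = tg • f1 x := by
    have h : f1 ∘ₗ DistribSMul.toLinearMap k Qs tg
        = DistribSMul.toLinearMap k V tg ∘ₗ f1 := by
      apply Bs.ext; intro i; fin_cases i <;>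
        (simp [hf1def, hq2, hq4, hV3', hV6']; try abel)
    intro x; simpa using LinearMap.congr_fun h x
  have E2s : ∀ x : Qt, f2 (sg • x) = sg • f2 x := by
    have h : f2 ∘ₗ DistribSMul.toLinearMap k Qt sg
        = DistribSMul.toLinearMap k V sg ∘ₗ f2 := by
      apply Bt.ext; intro i; fin_cases i <;>
        (simp [hf2def, ht1, ht3, hV2', hV5']; try abel)
    intro x; simpa using LinearMap.congr_fun h x
  have E2t : ∀ x : Qt, f2 (tg • x) = tg • f2 x := by
    have h : f2 ∘ₗ DistribSMul.toLinearMap k Qt tg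
        = DistribSMul.toLinearMap k V tg ∘ₗ f2 := by
      apply Bt.ext; intro i; fin_cases i <;>
        (simp [hf2def, ht2, ht4, hV4', hV6']; try abel)
    intro x; simpa using LinearMap.congr_fun h x
  have E3s : ∀ x : Qst, f3 (sg • x) = sg • f3 x := by
    have h : f3 ∘ₗ DistribSMul.toLinearMap k Qst sg
        = DistribSMul.toLinearMap k V sg ∘ₗ f3 := by
      apply Bst.ext; intro i; fin_cases i <;>
        (simp [hf3def, hu1, hu3, hV1, hV2', hV5', smul_add]; try abel)
    intro x; simpa using LinearMap.congr_fun h x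
  have E3t : ∀ x : Qst, f3 (tg • x) = tg • f3 x := by
    have h : f3 ∘ₗ DistribSMul.toLinearMap k Qst tg
        = DistribSMul.toLinearMap k V tg ∘ₗ f3 := by
      apply Bst.ext; intro i; fin_cases i <;>
        (simp [hf3def, hu2, hu4, hV3', hV4', hV6', smul_add]; try abel)
    intro x; simpa using LinearMap.congr_fun h x
  have Es : ∀ (x : Qs) (y : Qt) (z : Qst),
      π (sg • x, sg • y, sg • z) = sg • π (x, y, z) := by
    intro x y z; rw [hπ, hπ, E1s, E2s, E3s, smul_add, smul_add]
  have Et : ∀ (x : Qs) (y : Qt) (z : Qst),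
      π (tg • x, tg • y, tg • z) = tg • π (x, y, z) := by
    intro x y z; rw [hπ, hπ, E1t, E2t, E3t, smul_add, smul_add]
  have Eπ : ∀ (g : K4) (q : Qs × Qt × Qst),
      π (g • q.1, g • q.2.1, g • q.2.2) = g • π q := by
    rintro g ⟨x, y, z⟩
    show π (g • x, g • y, g • z) = g • π (x, y, z)
    rcases K4_cases g with rfl | rfl | rfl | rfl
    · simp only [one_smul]
    · exact Es x y z
    · exact Et x y z
    · simp only [mul_smul]; rw [Es, Et]
  -- surjectivity
  have hsurj : Function.Surjective π := by
    rw [← LinearMap.range_eq_top, ← top_le_iff, ← B.span_eq, Submodule.span_le]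
    rintro v ⟨i, rfl⟩
    simp only [SetLike.mem_coe, LinearMap.mem_range]
    rcases i with i | i
    · fin_cases i
      · exact ⟨(Bs 0, 0, 0), by rw [hπ]; simp [hf1_0]⟩
      · exact ⟨(0, Bt 0, 0), by rw [hπ]; simp [hf2_0]⟩
    · fin_cases i
      exact ⟨(Bs 1, 0, 0), by rw [hπ]; simp [hf1_1]⟩
  -- splittings
  set s1 : V →ₗ[k] (Qs × Qt × Qst) :=
    B.constr k (Sum.elim ![(Bs 0, 0, 0), (0, Bt 0, 0)] ![(0, Bt 1, 0)]) with hs1def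
  set s2 : V →ₗ[k] (Qs × Qt × Qst) :=
    B.constr k (Sum.elim ![(Bs 0, 0, 0), (0, Bt 0, 0)] ![(Bs 1, 0, 0)]) with hs2def
  set s3 : V →ₗ[k] (Qs × Qt × Qst) :=
    B.constr k (Sum.elim ![(Bs 0, 0, 0), (Bs 0, 0, Bst 0)] ![(Bs 1, 0, 0)]) with hs3def
  have hπs1 : ∀ v, π (s1 v) = v := by
    have h : π ∘ₗ s1 = LinearMap.id := by
      apply B.ext; rintro (i | i) <;> fin_cases i <;>
        (rw [LinearMap.comp_apply]; simp [hs1def, hπ, hf1_0, hf1_1, hf2_0, hf2_1])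
    intro v; simpa using LinearMap.congr_fun h v
  have hπs2 : ∀ v, π (s2 v) = v := by
    have h : π ∘ₗ s2 = LinearMap.id := by
      apply B.ext; rintro (i | i) <;> fin_cases i <;>
        (rw [LinearMap.comp_apply]; simp [hs2def, hπ, hf1_0, hf1_1, hf2_0, hf2_1])
    intro v; simpa using LinearMap.congr_fun h v
  have hπs3 : ∀ v, π (s3 v) = v := by
    have h : π ∘ₗ s3 = LinearMap.id := by
      apply B.ext
      rintro (i | i) <;> fin_cases i <;>
        (rw [LinearMap.comp_apply]; simp [hs3def, hπ, hf1_0, hf1_1, hf3_0]) <;>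
        (try (rw [← add_assoc, h2V, zero_add]))
    intro v; simpa using LinearMap.congr_fun h v
  -- action facts for sg*tg
  have hstV0 : (sg*tg) • B (Sum.inl 0) = B (Sum.inl 0) + B (Sum.inr 0) := by
    rw [mul_smul, hV3', smul_add, hV1, hV5']
  have hstV1 : (sg*tg) • B (Sum.inl 1) = B (Sum.inl 1) + B (Sum.inr 0) := by
    rw [mul_smul, hV4', hV2']
  have hstVb : (sg*tg) • B (Sum.inr 0) = B (Sum.inr 0) := by
    rw [mul_smul, hV6', hV5']
  have hstQs0 : (sg*tg) • Bs 0 = Bs 0 + Bs 1 := by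
    rw [mul_smul, hq2, smul_add, hq1, hq3]
  have hstQs1 : (sg*tg) • Bs 1 = Bs 1 := by rw [mul_smul, hq4, hq3]
  have hstQst0 : (sg*tg) • Bst 0 = Bst 0 := by
    rw [mul_smul, hu2, smul_add, hu1, hu3, add_assoc, h2U, add_zero]
  -- equivariance of the sections
  have hs1eq : ∀ v : V, s1 (sg • v) = (sg • (s1 v).1, sg • (s1 v).2.1, sg • (s1 v).2.2) := by
    have h : s1 ∘ₗ DistribSMul.toLinearMap k V sg
        = ((DistribSMul.toLinearMap k Qs sg).prodMap
            ((DistribSMul.toLinearMap k Qt sg).prodMap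
              (DistribSMul.toLinearMap k Qst sg))) ∘ₗ s1 := by
      apply B.ext; rintro (i | i) <;> fin_cases i <;>
        (simp only [Fin.mk_zero, Fin.mk_one, Fin.isValue, LinearMap.comp_apply, LinearMap.prodMap_apply, DistribSMul.toLinearMap_apply, Module.Basis.constr_basis, Sum.elim_inl, Sum.elim_inr, Matrix.cons_val_zero, Matrix.cons_val_one, Matrix.head_cons, map_add, map_zero, Prod.mk_add_mk, Prod.mk.injEq, smul_zero, add_zero, zero_add, and_self, and_true, true_and, hs1def, hV1, hV2', hV5', hq1, hq3, ht1, ht3]; try rfl)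
    intro v
    simpa only [LinearMap.comp_apply, LinearMap.prodMap_apply, DistribSMul.toLinearMap_apply] using LinearMap.congr_fun h v
  have hs2eq : ∀ v : V, s2 (tg • v) = (tg • (s2 v).1, tg • (s2 v).2.1, tg • (s2 v).2.2) := by
    have h : s2 ∘ₗ DistribSMul.toLinearMap k V tg
        = ((DistribSMul.toLinearMap k Qs tg).prodMap
            ((DistribSMul.toLinearMap k Qt tg).prodMap
              (DistribSMul.toLinearMap k Qst tg))) ∘ₗ s2 := by
      apply B.ext; rintro (i | i) <;> fin_cases i <;>
        (simp only [Fin.mk_zero, Fin.mk_one, Fin.isValue, LinearMap.comp_apply, LinearMap.prodMap_apply, DistribSMul.toLinearMap_apply, Module.Basis.constr_basis, Sum.elim_inl, Sum.elim_inr, Matrix.cons_val_zero, Matrix.cons_val_one, Matrix.head_cons, map_add, map_zero, Prod.mk_add_mk, Prod.mk.injEq, smul_zero, add_zero, zero_add, and_self, and_true, true_and, hs2def, hV3', hV4', hV6', hq2, hq4, ht2, ht4]; try rfl)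
    intro v
    simpa only [LinearMap.comp_apply, LinearMap.prodMap_apply, DistribSMul.toLinearMap_apply] using LinearMap.congr_fun h v
  have hs3eq : ∀ v : V, s3 ((sg*tg) • v)
      = ((sg*tg) • (s3 v).1, (sg*tg) • (s3 v).2.1, (sg*tg) • (s3 v).2.2) := by
    have h : s3 ∘ₗ DistribSMul.toLinearMap k V (sg*tg)
        = ((DistribSMul.toLinearMap k Qs (sg*tg)).prodMap
            ((DistribSMul.toLinearMap k Qt (sg*tg)).prodMap
              (DistribSMul.toLinearMap k Qst (sg*tg)))) ∘ₗ s3 := by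
      apply B.ext; rintro (i | i) <;> fin_cases i <;>
        (simp only [Fin.mk_zero, Fin.mk_one, Fin.isValue, LinearMap.comp_apply, LinearMap.prodMap_apply, DistribSMul.toLinearMap_apply, Module.Basis.constr_basis, Sum.elim_inl, Sum.elim_inr, Matrix.cons_val_zero, Matrix.cons_val_one, Matrix.head_cons, map_add, map_zero, Prod.mk_add_mk, Prod.mk.injEq, smul_zero, add_zero, zero_add, and_self, and_true, true_and, hs3def, hstV0, hstV1, hstVb, hstQs0, hstQs1, hstQst0]; try rfl)
    intro v
    simpa only [LinearMap.comp_apply, LinearMap.prodMap_apply, DistribSMul.toLinearMap_apply] using LinearMap.congr_fun h v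
  -- the kernel inclusion ι
  set ι : W →ₗ[k] (Qs × Qt × Qst) :=
    BW.constr k (Sum.elim ![(Bs 0, Bt 0, Bst 0)] ![(0, Bt 1, Bst 1), (Bs 1, 0, Bst 1)]) with hιdef
  set ρ : (Qs × Qt × Qst) →ₗ[k] W :=
    ((Bs.coord 0) ∘ₗ LinearMap.fst k Qs (Qt × Qst)).smulRight (BW (Sum.inl 0))
    + ((Bt.coord 1) ∘ₗ (LinearMap.fst k Qt Qst ∘ₗ LinearMap.snd k Qs (Qt × Qst))).smulRight (BW (Sum.inr 0))
    + ((Bs.coord 1) ∘ₗ LinearMap.fst k Qs (Qt × Qst)).smulRight (BW (Sum.inr 1)) with hρdef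
  have hρι : ∀ w, ρ (ι w) = w := by
    have h : ρ ∘ₗ ι = LinearMap.id := by
      apply BW.ext; rintro (i | i) <;> fin_cases i <;>
        simp [hρdef, hιdef, Module.Basis.coord_apply, Finsupp.single_apply]
    intro w; simpa using LinearMap.congr_fun h w
  have hinj : Function.Injective ι := Function.LeftInverse.injective hρι
  have Eιs : ∀ w : W, ι (sg • w) = (sg • (ι w).1, sg • (ι w).2.1, sg • (ι w).2.2) := by
    have h : ι ∘ₗ DistribSMul.toLinearMap k W sg
        = ((DistribSMul.toLinearMap k Qs sg).prodMap
            ((DistribSMul.toLinearMap k Qt sg).prodMap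
              (DistribSMul.toLinearMap k Qst sg))) ∘ₗ ι := by
      apply BW.ext; rintro (i | i) <;> fin_cases i <;>
        (simp only [Fin.mk_zero, Fin.mk_one, Fin.isValue, LinearMap.comp_apply, LinearMap.prodMap_apply, DistribSMul.toLinearMap_apply, Module.Basis.constr_basis, Sum.elim_inl, Sum.elim_inr, Matrix.cons_val_zero, Matrix.cons_val_one, Matrix.head_cons, map_add, map_zero, Prod.mk_add_mk, Prod.mk.injEq, smul_zero, add_zero, zero_add, and_self, and_true, true_and, hιdef, hw1', hw3a, hw3b, hq1, hq3, ht1, ht3, hu1, hu3]; try rfl)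
    intro w
    simpa only [LinearMap.comp_apply, LinearMap.prodMap_apply, DistribSMul.toLinearMap_apply] using LinearMap.congr_fun h w
  have Eιt : ∀ w : W, ι (tg • w) = (tg • (ι w).1, tg • (ι w).2.1, tg • (ι w).2.2) := by
    have h : ι ∘ₗ DistribSMul.toLinearMap k W tg
        = ((DistribSMul.toLinearMap k Qs tg).prodMap
            ((DistribSMul.toLinearMap k Qt tg).prodMap
              (DistribSMul.toLinearMap k Qst tg))) ∘ₗ ι := by
      apply BW.ext; rintro (i | i) <;> fin_cases i <;>
        (simp only [Fin.mk_zero, Fin.mk_one, Fin.isValue, LinearMap.comp_apply, LinearMap.prodMap_apply, DistribSMul.toLinearMap_apply, Module.Basis.constr_basis, Sum.elim_inl, Sum.elim_inr, Matrix.cons_val_zero, Matrix.cons_val_one, Matrix.head_cons, map_add, map_zero, Prod.mk_add_mk, Prod.mk.injEq, smul_zero, add_zero, zero_add, and_self, and_true, true_and, hιdef, hw2', hw4a, hw4b, hq2, hq4, ht2, ht4, hu2, hu4]; try rfl)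
    intro w
    simpa only [LinearMap.comp_apply, LinearMap.prodMap_apply, DistribSMul.toLinearMap_apply] using LinearMap.congr_fun h w
  have Eι : ∀ (g : K4) (w : W), ι (g • w) = (g • (ι w).1, g • (ι w).2.1, g • (ι w).2.2) := by
    intro g w
    rcases K4_cases g with rfl | rfl | rfl | rfl
    · simp only [one_smul]
    · exact Eιs w
    · exact Eιt w
    · rw [mul_smul, Eιs, Eιt]
      simp only [mul_smul]
  -- range ι = ker π
  have hcomp : π ∘ₗ ι = 0 := by
    apply BW.ext; rintro (i | i) <;> fin_cases i <;>
      (rw [LinearMap.comp_apply]; simp [hιdef, hπ, hf1_0, hf1_1, hf2_0, hf2_1, hf3_0, hf3_1, h2V])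
  have hle : LinearMap.range ι ≤ LinearMap.ker π := by
    rintro x ⟨w, rfl⟩
    exact LinearMap.mem_ker.mpr (by simpa using LinearMap.congr_fun hcomp w)
  have : Module.Finite k V := Module.Finite.of_basis B
  have : Module.Finite k Qs := Module.Finite.of_basis Bs
  have : Module.Finite k Qt := Module.Finite.of_basis Bt
  have : Module.Finite k Qst := Module.Finite.of_basis Bst
  have : Module.Finite k W := Module.Finite.of_basis BW
  have hkr : LinearMap.range ι = LinearMap.ker π := by
    apply Submodule.eq_of_le_of_finrank_eq hle
    have h1 := LinearMap.finrank_range_add_finrank_ker π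
    rw [LinearMap.range_eq_top.mpr hsurj, finrank_top] at h1
    have hVr : Module.finrank k V = 3 := by
      rw [Module.finrank_eq_card_basis B]; simp
    have hD : Module.finrank k (Qs × Qt × Qst) = 6 := by
      rw [Module.finrank_prod, Module.finrank_prod,
        Module.finrank_eq_card_basis Bs, Module.finrank_eq_card_basis Bt,
        Module.finrank_eq_card_basis Bst]
      simp
    have hR : Module.finrank k ↥(LinearMap.range ι) = 3 := by
      rw [LinearMap.finrank_range_of_inj hinj, Module.finrank_eq_card_basis BW]; simp
    rw [hR]; omega
  refine ⟨π, hsurj, Eπ, ?_, ι, hinj, Eι, hkr⟩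
  intro H hH
  simp only [Set.mem_insert_iff, Set.mem_singleton_iff] at hH
  rcases hH with rfl | rfl | rfl
  · refine ⟨s1, hπs1, ?_⟩
    intro h hh v
    have hh' : h ∈ Subgroup.zpowers sg := hh
    rcases K4_zpowers_cases hh' with rfl | rfl
    · simp only [one_smul]
    · exact hs1eq v
  · refine ⟨s2, hπs2, ?_⟩
    intro h hh v
    have hh' : h ∈ Subgroup.zpowers tg := hh
    rcases K4_zpowers_cases hh' with rfl | rfl
    · simp only [one_smul]
    · exact hs2eq v
  · refine ⟨s3, hπs3, ?_⟩
    intro h hh v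
    have hh' : h ∈ Subgroup.zpowers (sg * tg) := hh
    rcases K4_zpowers_cases hh' with rfl | rfl
    · simp only [one_smul]
    · exact hs3eq v
end

section
/- For every n ≥ 2 there exists a surjective kG-module homomorphism π : Q_τ ⊕ Q_τ ⊕ (kG)^{n−1} → V_{2n,∞} which splits on restriction to each of the subgroups H₁, H₂, H₃, and whose kernel is isomorphic as a kG-module to V_{2n,∞}. -/
/-- `V` carries the structure of the module `V_{2n,∞}`: the basis vector `B (Sum.inl i)`
is `a_{i+1}` and `B (Sum.inr i)` is `b_{i+1}` (for `0 ≤ i ≤ n-1`), with `X·aᵢ = bᵢ` for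
all `i`, `Y·aᵢ = b_{i+1}` for `i ≤ n-1`, `Y·aₙ = 0`, and `X·bⱼ = Y·bⱼ = 0`, i.e.
(with `σ = 1 + X`, `τ = 1 + Y`) `σ·aᵢ = aᵢ + bᵢ`, `τ·aᵢ = aᵢ + b_{i+1}` (reading
`b_{n+1} = 0`), and `σ, τ` fix the `bⱼ`. -/
def IsVinf (k : Type) [Field k] (n : ℕ) (V : Type) [AddCommGroup V] [Module k V]
    [DistribMulAction K4 V] (B : Module.Basis (Fin n ⊕ Fin n) k V) : Prop :=
  (∀ i : Fin n, sg • B (Sum.inl i) = B (Sum.inl i) + B (Sum.inr i)) ∧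
  (∀ i : Fin n, tg • B (Sum.inl i) = B (Sum.inl i) +
      (if h : (i : ℕ) + 1 < n then B (Sum.inr ⟨(i : ℕ) + 1, h⟩) else 0)) ∧
  (∀ j : Fin n, sg • B (Sum.inr j) = B (Sum.inr j)) ∧
  (∀ j : Fin n, tg • B (Sum.inr j) = B (Sum.inr j))

set_option linter.unusedSectionVars false
set_option linter.unusedVariables false

namespace S9

lemma k4_cases : ∀ g : K4, g = 1 ∨ g = sg ∨ g = tg ∨ g = sg * tg := by decide
lemma k4_sq : ∀ g : K4, g * g = 1 := by decide
@[simp] lemma sg_sg : sg * sg = 1 := by decide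
@[simp] lemma tg_tg : tg * tg = 1 := by decide
@[simp] lemma tg_sg : tg * sg = sg * tg := by decide
@[simp] lemma st_st : (sg * tg) * (sg * tg) = 1 := by decide
@[simp] lemma sg_st : sg * (sg * tg) = tg := by decide
@[simp] lemma tg_st : tg * (sg * tg) = sg := by decide
@[simp] lemma st_sg : (sg * tg) * sg = tg := by decide
@[simp] lemma st_tg : (sg * tg) * tg = sg := by decide

lemma mem_zpowers_k4 {x h : K4} (hm : h ∈ Subgroup.zpowers x) : h = 1 ∨ h = x := by
  rw [Subgroup.mem_zpowers_iff] at hm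
  obtain ⟨m, rfl⟩ := hm
  rcases Int.even_or_odd m with ⟨c, rfl⟩ | ⟨c, rfl⟩
  · left; rw [zpow_add, k4_sq]
  · right; rw [zpow_add, zpow_one, two_mul, zpow_add, k4_sq, one_mul]

lemma addSelf (k : Type) [Field k] [CharP k 2] {M : Type} [AddCommGroup M] [Module k M]
    (v : M) : v + v = 0 := by
  have h := two_smul k v
  rw [← h, show (2:k) = 0 from by exact_mod_cast (CharP.cast_eq_zero k 2), zero_smul]

lemma addSelf' (k : Type) [Field k] [CharP k 2] {M : Type} [AddCommGroup M] [Module k M]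
    (v w : M) : v + (v + w) = w := by rw [← add_assoc, addSelf k, zero_add]

variable {k : Type} [Field k]

def dd (k : Type) [Field k] (g : K4) : K4 → k := fun x => if x = g then 1 else 0

def sing {m : ℕ} (c : Fin m) (f : K4 → k) : Fin m → K4 → k :=
  fun c' => if c' = c then f else 0

lemma sing_add {m : ℕ} (c : Fin m) (f g : K4 → k) :
    sing c (f + g) = sing c f + sing c g := by
  funext c'; by_cases h : c' = c <;> simp [sing, h]

def sumMap {V : Type} [AddCommGroup V] [Module k V] {m : ℕ} (W : Fin m → K4 → V) :
    (Fin m → K4 → k) →ₗ[k] V where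
  toFun F := ∑ c, ∑ g, F c g • W c g
  map_add' F G := by simp [add_smul, Finset.sum_add_distrib]
  map_smul' r F := by simp [Finset.smul_sum, smul_smul]

lemma sumMap_apply {V : Type} [AddCommGroup V] [Module k V] {m : ℕ} (W : Fin m → K4 → V)
    (F : Fin m → K4 → k) : sumMap W F = ∑ c, ∑ g, F c g • W c g := rfl

lemma sum_dd_smul {V : Type} [AddCommGroup V] [Module k V] (h : K4) (w : K4 → V) :
    ∑ g, dd k h g • w g = w h := by
  rw [Fintype.sum_eq_single h]
  · simp [dd]
  · intro b hb; simp [dd, hb]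

lemma sumMap_sing {V : Type} [AddCommGroup V] [Module k V] {m : ℕ} (W : Fin m → K4 → V)
    (c : Fin m) (f : K4 → k) : sumMap W (sing c f) = ∑ g, f g • W c g := by
  rw [sumMap_apply, Fintype.sum_eq_single c]
  · simp [sing]
  · intro b hb; simp [sing, hb]

lemma sumMap_sing_dd {V : Type} [AddCommGroup V] [Module k V] {m : ℕ} (W : Fin m → K4 → V)
    (c : Fin m) (h : K4) : sumMap W (sing c (dd k h)) = W c h := by
  rw [sumMap_sing, sum_dd_smul]

instance regSMul : SMul K4 (K4 → k) := ⟨fun g F => fun x => F (g⁻¹ * x)⟩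

@[simp] lemma regSMul_apply (g : K4) (F : K4 → k) (x : K4) : (g • F) x = F (g⁻¹ * x) := rfl

instance regDMA : DistribMulAction K4 (K4 → k) where
  one_smul F := by funext x; simp
  mul_smul g h F := by funext x; simp [mul_assoc]
  smul_add g F G := rfl
  smul_zero g := rfl

instance regSCC : SMulCommClass K4 k (K4 → k) := ⟨fun g r F => rfl⟩

@[simp] lemma smul_dd (g h : K4) : g • dd k h = dd k (g * h) := by
  funext x; simp [dd, inv_mul_eq_iff_eq_mul]

lemma smul_sing {m : ℕ} (g : K4) (c : Fin m) (f : K4 → k) :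
    g • sing c f = sing c (g • f) := by
  funext c'; by_cases h : c' = c <;> simp [sing, h]

lemma lin_equivariant_of_basis {M N : Type} [AddCommGroup M] [Module k M]
    [DistribMulAction K4 M] [SMulCommClass K4 k M]
    [AddCommGroup N] [Module k N] [DistribMulAction K4 N] [SMulCommClass K4 k N]
    {ι' : Type} (Bm : Module.Basis ι' k M) (L : M →ₗ[k] N) (g : K4)
    (h : ∀ i, L (g • Bm i) = g • L (Bm i)) (v : M) : L (g • v) = g • L v := by
  have h2 : L ∘ₗ DistribSMul.toLinearMap k M g
      = DistribSMul.toLinearMap k N g ∘ₗ L := by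
    apply Bm.ext; intro i
    simpa [DistribSMul.toLinearMap_apply] using h i
  simpa [DistribSMul.toLinearMap_apply] using DFunLike.congr_fun h2 v

lemma equivariant_all {M N : Type} [AddCommGroup M] [Module k M]
    [DistribMulAction K4 M] [SMulCommClass K4 k M]
    [AddCommGroup N] [Module k N] [DistribMulAction K4 N] [SMulCommClass K4 k N]
    (L : M →ₗ[k] N) (hs : ∀ v, L (sg • v) = sg • L v) (ht : ∀ v, L (tg • v) = tg • L v)
    (g : K4) (v : M) : L (g • v) = g • L v := by
  rcases k4_cases g with rfl | rfl | rfl | rfl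
  · simp
  · exact hs v
  · exact ht v
  · rw [mul_smul, hs, ht, mul_smul]

lemma triple_ext {A B C : Type} {x x' : A} {y y' : B} {z z' : C}
    (h1 : x = x') (h2 : y = y') (h3 : z = z') : ((x,y,z) : A × B × C) = (x',y',z') := by
  subst h1; subst h2; subst h3; rfl

lemma tele (k : Type) [Field k] [CharP k 2] {M : Type} [AddCommGroup M] [Module k M]
    (u : ℕ → M) (jj : ℕ) : ∀ N, jj ≤ N →
    ∑ t ∈ Finset.range N, (if jj ≤ t then u t + u (t+1) else 0) = u jj + u N := by
  intro N
  induction N with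
  | zero =>
    intro h
    have : jj = 0 := by omega
    subst this
    simp [addSelf k]
  | succ N ih =>
    intro h
    rw [Finset.sum_range_succ]
    by_cases hN : jj ≤ N
    · rw [ih hN, if_pos hN, add_assoc, addSelf' k]
    · have hj : jj = N + 1 := by omega
      rw [if_neg hN, add_zero, Finset.sum_eq_zero, hj, addSelf k]
      intro t ht
      rw [if_neg (by simp at ht; omega)]

end S9

set_option maxHeartbeats 1000000

namespace S9

section Main

variable {k : Type} [Field k] [CharP k 2] (n : ℕ) {V Qt : Type}
  [AddCommGroup V] [Module k V] [DistribMulAction K4 V] [SMulCommClass K4 k V]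
  [AddCommGroup Qt] [Module k Qt] [DistribMulAction K4 Qt] [SMulCommClass K4 k Qt]
  (B : Module.Basis (Fin (n+2) ⊕ Fin (n+2)) k V) (Bt : Module.Basis (Fin 2) k Qt)

noncomputable def piQ1 : Qt →ₗ[k] V :=
  Bt.constr ℕ ![B (Sum.inl (Fin.last (n+1))), B (Sum.inr (Fin.last (n+1)))]

noncomputable def piQ2 : Qt →ₗ[k] V :=
  Bt.constr ℕ ![B (Sum.inl (Fin.last (n+1))) + B (Sum.inr 0), B (Sum.inr (Fin.last (n+1)))]

noncomputable def piF : (Fin (n+1) → K4 → k) →ₗ[k] V :=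
  sumMap (fun c g => g • B (Sum.inl c.castSucc))

noncomputable def piMap : (Qt × Qt × (Fin (n+1) → K4 → k)) →ₗ[k] V :=
  piQ1 n B Bt ∘ₗ LinearMap.fst k Qt (Qt × (Fin (n+1) → K4 → k))
  + piQ2 n B Bt ∘ₗ (LinearMap.fst k Qt (Fin (n+1) → K4 → k) ∘ₗ
      LinearMap.snd k Qt (Qt × (Fin (n+1) → K4 → k)))
  + piF n B ∘ₗ (LinearMap.snd k Qt (Fin (n+1) → K4 → k) ∘ₗ
      LinearMap.snd k Qt (Qt × (Fin (n+1) → K4 → k)))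

lemma piMap_apply (q1 q2 : Qt) (F : Fin (n+1) → K4 → k) :
    piMap n B Bt (q1, q2, F) = piQ1 n B Bt q1 + piQ2 n B Bt q2 + piF n B F := by
  simp [piMap]

@[simp] lemma piQ1_0 : piQ1 n B Bt (Bt 0) = B (Sum.inl (Fin.last (n+1))) := by simp [piQ1]
@[simp] lemma piQ1_1 : piQ1 n B Bt (Bt 1) = B (Sum.inr (Fin.last (n+1))) := by simp [piQ1]
@[simp] lemma piQ2_0 : piQ2 n B Bt (Bt 0) = B (Sum.inl (Fin.last (n+1))) + B (Sum.inr 0) := by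
  simp [piQ2]
@[simp] lemma piQ2_1 : piQ2 n B Bt (Bt 1) = B (Sum.inr (Fin.last (n+1))) := by simp [piQ2]

lemma piF_sing_dd (c : Fin (n+1)) (h : K4) :
    piF n B (sing c (dd k h)) = h • B (Sum.inl c.castSucc) := sumMap_sing_dd _ c h

lemma last_top : ∀ (i : Fin (n+2)), ¬ (i.1 < n+1) → i = Fin.last (n+1) := by
  intro i h; apply Fin.ext; simp [Fin.val_last]; omega

lemma cs_eq : ∀ (i : Fin (n+2)) (h : i.1 < n+1), (Fin.castSucc ⟨i.1, h⟩ : Fin (n+2)) = i :=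
  fun i h => Fin.ext rfl

lemma hta_top (hV : IsVinf k (n+2) V B) :
    tg • B (Sum.inl (Fin.last (n+1))) = B (Sum.inl (Fin.last (n+1))) := by
  rw [hV.2.1, dif_neg (by simp [Fin.val_last]), add_zero]

lemma hta (hV : IsVinf k (n+2) V B) (i : Fin (n+2)) (h : i.1 + 1 < n+2) :
    tg • B (Sum.inl i) = B (Sum.inl i) + B (Sum.inr ⟨i.1+1, h⟩) := by
  rw [hV.2.1, dif_pos h]

lemma hst (hV : IsVinf k (n+2) V B) (i : Fin (n+2)) (h : i.1 + 1 < n+2) :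
    (sg * tg) • B (Sum.inl i)
      = B (Sum.inl i) + (B (Sum.inr i) + B (Sum.inr ⟨i.1+1, h⟩)) := by
  rw [mul_smul, hta n B hV i h, smul_add, hV.1, hV.2.2.1, add_assoc]

lemma hst_top (hV : IsVinf k (n+2) V B) :
    (sg * tg) • B (Sum.inl (Fin.last (n+1)))
      = B (Sum.inl (Fin.last (n+1))) + B (Sum.inr (Fin.last (n+1))) := by
  rw [mul_smul, hta_top n B hV, hV.1]

lemma piQ1_eqv (hV : IsVinf k (n+2) V B) (hQt : IsQtau k Qt Bt) (g : K4) (q : Qt) :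
    piQ1 n B Bt (g • q) = g • piQ1 n B Bt q := by
  refine equivariant_all _ (fun v => lin_equivariant_of_basis Bt _ sg
      (Fin.forall_fin_two.mpr ⟨?_, ?_⟩) v)
    (fun v => lin_equivariant_of_basis Bt _ tg (Fin.forall_fin_two.mpr ⟨?_, ?_⟩) v) g q
  · rw [hQt.1, map_add, piQ1_0, piQ1_1, hV.1]
  · rw [hQt.2.2.1, piQ1_1, hV.2.2.1]
  · rw [hQt.2.1, piQ1_0, hta_top n B hV]
  · rw [hQt.2.2.2, piQ1_1, hV.2.2.2]

lemma piQ2_eqv (hV : IsVinf k (n+2) V B) (hQt : IsQtau k Qt Bt) (g : K4) (q : Qt) :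
    piQ2 n B Bt (g • q) = g • piQ2 n B Bt q := by
  refine equivariant_all _ (fun v => lin_equivariant_of_basis Bt _ sg
      (Fin.forall_fin_two.mpr ⟨?_, ?_⟩) v)
    (fun v => lin_equivariant_of_basis Bt _ tg (Fin.forall_fin_two.mpr ⟨?_, ?_⟩) v) g q
  · rw [hQt.1, map_add, piQ2_0, piQ2_1, smul_add, hV.1, hV.2.2.1]
    abel
  · rw [hQt.2.2.1, piQ2_1, hV.2.2.1]
  · rw [hQt.2.1, piQ2_0, smul_add, hta_top n B hV, hV.2.2.2]
  · rw [hQt.2.2.2, piQ2_1, hV.2.2.2]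

lemma piF_eqv (g : K4) (F : Fin (n+1) → K4 → k) :
    piF n B (g • F) = g • piF n B F := by
  rw [piF, sumMap_apply, sumMap_apply, Finset.smul_sum]
  refine Finset.sum_congr rfl fun c _ => ?_
  rw [Finset.smul_sum]
  refine (Fintype.sum_equiv (Equiv.mulLeft g) _ _ fun x => ?_).symm
  simp only [Equiv.coe_mulLeft, Pi.smul_apply, regSMul_apply, inv_mul_cancel_left,
    mul_smul]
  rw [smul_comm]

lemma piMap_eqv (hV : IsVinf k (n+2) V B) (hQt : IsQtau k Qt Bt) (g : K4) (q : Qt × Qt × (Fin (n+1) → K4 → k)) :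
    piMap n B Bt (g • q) = g • piMap n B Bt q := by
  obtain ⟨q1, q2, F⟩ := q
  have h : g • ((q1, q2, F) : Qt × Qt × (Fin (n+1) → K4 → k)) = (g • q1, g • q2, g • F) := rfl
  rw [h, piMap_apply, piMap_apply, piQ1_eqv n B Bt hV hQt, piQ2_eqv n B Bt hV hQt,
    piF_eqv, smul_add, smul_add]

lemma piMap_surj (hV : IsVinf k (n+2) V B) : Function.Surjective (piMap n B Bt) := by
  rw [← LinearMap.range_eq_top, eq_top_iff, ← B.span_eq, Submodule.span_le]
  rintro _ ⟨idx, rfl⟩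
  rcases idx with i | j
  · by_cases h : i.1 < n+1
    · refine ⟨(0, 0, sing ⟨i.1, h⟩ (dd k 1)), ?_⟩
      rw [piMap_apply, map_zero (piQ1 n B Bt), map_zero (piQ2 n B Bt), piF_sing_dd,
        one_smul, zero_add, zero_add, cs_eq n i h]
    · refine ⟨(Bt 0, 0, 0), ?_⟩
      rw [piMap_apply, map_zero (piQ2 n B Bt), map_zero (piF n B), piQ1_0, add_zero,
        add_zero, last_top n i h]
  · by_cases h : j.1 < n+1
    · refine ⟨(0, 0, sing ⟨j.1, h⟩ (dd k 1 + dd k sg)), ?_⟩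
      rw [piMap_apply, map_zero (piQ1 n B Bt), map_zero (piQ2 n B Bt), zero_add,
        zero_add, sing_add, map_add, piF_sing_dd, piF_sing_dd, one_smul, cs_eq n j h,
        hV.1, addSelf' k]
    · refine ⟨(Bt 1, 0, 0), ?_⟩
      rw [piMap_apply, map_zero (piQ2 n B Bt), map_zero (piF n B), piQ1_1, add_zero,
        add_zero, last_top n j h]

noncomputable def sH1 : V →ₗ[k] Qt × Qt × (Fin (n+1) → K4 → k) :=
  B.constr ℕ fun idx =>
    match idx with
    | Sum.inl i => if h : i.1 < n+1 then ((0:Qt), (0:Qt), sing ⟨i.1, h⟩ (dd k 1))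
        else (Bt 0, 0, 0)
    | Sum.inr j => if h : j.1 < n+1 then ((0:Qt), (0:Qt), sing ⟨j.1, h⟩ (dd k 1 + dd k sg))
        else (Bt 1, 0, 0)

lemma sH1_al (i : Fin (n+2)) (h : i.1 < n+1) :
    sH1 n B Bt (B (Sum.inl i)) = ((0:Qt), (0:Qt), sing ⟨i.1, h⟩ (dd k 1)) := by
  rw [sH1, Module.Basis.constr_basis]; exact dif_pos h

lemma sH1_al_top :
    sH1 n B Bt (B (Sum.inl (Fin.last (n+1)))) = (Bt 0, 0, 0) := by
  rw [sH1, Module.Basis.constr_basis]; exact dif_neg (by simp)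

lemma sH1_ar (j : Fin (n+2)) (h : j.1 < n+1) :
    sH1 n B Bt (B (Sum.inr j)) = ((0:Qt), (0:Qt), sing ⟨j.1, h⟩ (dd k 1 + dd k sg)) := by
  rw [sH1, Module.Basis.constr_basis]; exact dif_pos h

lemma sH1_ar_top :
    sH1 n B Bt (B (Sum.inr (Fin.last (n+1)))) = (Bt 1, 0, 0) := by
  rw [sH1, Module.Basis.constr_basis]; exact dif_neg (by simp)

lemma sH1_sect (hV : IsVinf k (n+2) V B) (v : V) :
    piMap n B Bt (sH1 n B Bt v) = v := by
  have h : (piMap n B Bt) ∘ₗ (sH1 n B Bt) = LinearMap.id := by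
    apply B.ext; rintro (i | j)
    · rw [LinearMap.comp_apply, LinearMap.id_apply]
      by_cases h : i.1 < n+1
      · rw [sH1_al n B Bt i h, piMap_apply, map_zero (piQ1 n B Bt),
          map_zero (piQ2 n B Bt), piF_sing_dd, one_smul, zero_add, zero_add, cs_eq n i h]
      · rw [last_top n i h, sH1_al_top, piMap_apply, map_zero (piQ2 n B Bt),
          map_zero (piF n B), piQ1_0, add_zero, add_zero]
    · rw [LinearMap.comp_apply, LinearMap.id_apply]
      by_cases h : j.1 < n+1
      · rw [sH1_ar n B Bt j h, piMap_apply, map_zero (piQ1 n B Bt),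
          map_zero (piQ2 n B Bt), zero_add, zero_add, sing_add, map_add, piF_sing_dd,
          piF_sing_dd, one_smul, cs_eq n j h, hV.1, addSelf' k]
      · rw [last_top n j h, sH1_ar_top, piMap_apply, map_zero (piQ2 n B Bt),
          map_zero (piF n B), piQ1_1, add_zero, add_zero]
  simpa using DFunLike.congr_fun h v

lemma sH1_eqv (hV : IsVinf k (n+2) V B) (hQt : IsQtau k Qt Bt) (v : V) :
    sH1 n B Bt (sg • v) = sg • sH1 n B Bt v := by
  refine lin_equivariant_of_basis B _ sg ?_ v
  rintro (i | j)
  · by_cases h : i.1 < n+1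
    · rw [hV.1, map_add, sH1_al n B Bt i h, sH1_ar n B Bt i h]
      simp only [Prod.mk_add_mk, Prod.smul_mk, add_zero, smul_zero]
      refine triple_ext rfl rfl ?_
      rw [smul_sing, smul_dd, mul_one, ← sing_add, addSelf' k]
    · rw [last_top n i h, hV.1, map_add, sH1_al_top, sH1_ar_top]
      simp only [Prod.mk_add_mk, Prod.smul_mk, add_zero, smul_zero]
      exact triple_ext (hQt.1).symm rfl rfl
  · by_cases h : j.1 < n+1
    · rw [hV.2.2.1, sH1_ar n B Bt j h]
      simp only [Prod.smul_mk, smul_zero, smul_sing, smul_add, smul_dd, mul_one, sg_sg]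
      refine triple_ext rfl rfl ?_
      rw [add_comm (dd k 1)]
    · rw [last_top n j h, hV.2.2.1, sH1_ar_top]
      simp only [Prod.smul_mk, smul_zero]
      exact triple_ext (hQt.2.2.1).symm rfl rfl

-- ================= sH2 =================

noncomputable def sH2 : V →ₗ[k] Qt × Qt × (Fin (n+1) → K4 → k) :=
  B.constr ℕ fun idx =>
    match idx with
    | Sum.inl i => if h : i.1 < n+1 then ((0:Qt), (0:Qt), sing ⟨i.1, h⟩ (dd k 1))
        else (Bt 0, 0, 0)
    | Sum.inr j => if h : j.1 = 0 then (Bt 0, Bt 0, 0)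
        else ((0:Qt), (0:Qt), sing ⟨j.1 - 1, by have := j.isLt; omega⟩ (dd k 1 + dd k tg))

lemma sH2_al (i : Fin (n+2)) (h : i.1 < n+1) :
    sH2 n B Bt (B (Sum.inl i)) = ((0:Qt), (0:Qt), sing ⟨i.1, h⟩ (dd k 1)) := by
  rw [sH2, Module.Basis.constr_basis]; exact dif_pos h

lemma sH2_al_top :
    sH2 n B Bt (B (Sum.inl (Fin.last (n+1)))) = (Bt 0, 0, 0) := by
  rw [sH2, Module.Basis.constr_basis]; exact dif_neg (by simp)

lemma sH2_r0 :
    sH2 n B Bt (B (Sum.inr 0)) = (Bt 0, Bt 0, 0) := by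
  rw [sH2, Module.Basis.constr_basis]; exact dif_pos rfl

lemma sH2_ar (j : Fin (n+2)) (h : ¬ j.1 = 0) (hb : j.1 - 1 < n+1) :
    sH2 n B Bt (B (Sum.inr j))
      = ((0:Qt), (0:Qt), sing ⟨j.1 - 1, hb⟩ (dd k 1 + dd k tg)) := by
  rw [sH2, Module.Basis.constr_basis]; exact dif_neg h

lemma sH2_sect (hV : IsVinf k (n+2) V B) (v : V) :
    piMap n B Bt (sH2 n B Bt v) = v := by
  have h : (piMap n B Bt) ∘ₗ (sH2 n B Bt) = LinearMap.id := by
    apply B.ext; rintro (i | j)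
    · rw [LinearMap.comp_apply, LinearMap.id_apply]
      by_cases h : i.1 < n+1
      · rw [sH2_al n B Bt i h, piMap_apply, map_zero (piQ1 n B Bt),
          map_zero (piQ2 n B Bt), piF_sing_dd, one_smul, zero_add, zero_add, cs_eq n i h]
      · rw [last_top n i h, sH2_al_top, piMap_apply, map_zero (piQ2 n B Bt),
          map_zero (piF n B), piQ1_0, add_zero, add_zero]
    · rw [LinearMap.comp_apply, LinearMap.id_apply]
      by_cases h : j.1 = 0
      · have hj : j = 0 := Fin.ext h
        subst hj
        rw [sH2_r0, piMap_apply, piQ1_0, piQ2_0, map_zero (piF n B), add_zero,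
          addSelf' k]
      · have hb : j.1 - 1 < n+1 := by have := j.isLt; omega
        rw [sH2_ar n B Bt j h hb, piMap_apply, map_zero (piQ1 n B Bt),
          map_zero (piQ2 n B Bt), zero_add, zero_add, sing_add, map_add,
          piF_sing_dd, piF_sing_dd, one_smul,
          hta n B hV _ (by simp <;> (have := j.isLt; omega)), addSelf' k]
        exact congrArg _ (congrArg _ (Fin.ext (by simp <;> omega)))
  simpa using DFunLike.congr_fun h v

lemma sH2_eqv (hV : IsVinf k (n+2) V B) (hQt : IsQtau k Qt Bt) (v : V) :
    sH2 n B Bt (tg • v) = tg • sH2 n B Bt v := by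
  refine lin_equivariant_of_basis B _ tg ?_ v
  rintro (i | j)
  · by_cases h : i.1 < n+1
    · have hb : i.1 + 1 - 1 < n + 1 := by omega
      rw [hta n B hV i (by omega), map_add, sH2_al n B Bt i h,
        sH2_ar n B Bt ⟨i.1+1, by omega⟩ (by simp) hb]
      have e : (⟨i.1 + 1 - 1, hb⟩ : Fin (n+1)) = ⟨i.1, h⟩ := Fin.ext (by simp)
      rw [e]
      simp only [Prod.mk_add_mk, Prod.smul_mk, add_zero, smul_zero]
      refine triple_ext rfl rfl ?_
      rw [smul_sing, smul_dd, mul_one, ← sing_add, addSelf' k]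
    · rw [last_top n i h, hta_top n B hV, sH2_al_top]
      simp only [Prod.smul_mk, smul_zero]
      exact triple_ext (hQt.2.1).symm rfl rfl
  · by_cases h : j.1 = 0
    · have hj : j = 0 := Fin.ext h
      subst hj
      rw [hV.2.2.2, sH2_r0]
      simp only [Prod.smul_mk, smul_zero]
      exact triple_ext (hQt.2.1).symm (hQt.2.1).symm rfl
    · have hb : j.1 - 1 < n+1 := by have := j.isLt; omega
      rw [hV.2.2.2, sH2_ar n B Bt j h hb]
      simp only [Prod.smul_mk, smul_zero, smul_sing, smul_add, smul_dd, mul_one, tg_tg]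
      refine triple_ext rfl rfl ?_
      rw [add_comm (dd k 1)]

-- ================= sH3 =================

noncomputable def sH3 : V →ₗ[k] Qt × Qt × (Fin (n+1) → K4 → k) :=
  B.constr ℕ fun idx =>
    match idx with
    | Sum.inl i => if h : i.1 < n+1 then ((0:Qt), (0:Qt), sing ⟨i.1, h⟩ (dd k 1))
        else (Bt 0, 0, 0)
    | Sum.inr j => (Bt 1, (0:Qt),
        fun c => if (j:ℕ) ≤ c.1 then dd k 1 + dd k (sg*tg) else 0)

lemma sH3_al (i : Fin (n+2)) (h : i.1 < n+1) :
    sH3 n B Bt (B (Sum.inl i)) = ((0:Qt), (0:Qt), sing ⟨i.1, h⟩ (dd k 1)) := by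
  rw [sH3, Module.Basis.constr_basis]; exact dif_pos h

lemma sH3_al_top :
    sH3 n B Bt (B (Sum.inl (Fin.last (n+1)))) = (Bt 0, 0, 0) := by
  rw [sH3, Module.Basis.constr_basis]; exact dif_neg (by simp)

lemma sH3_ar (j : Fin (n+2)) :
    sH3 n B Bt (B (Sum.inr j))
      = (Bt 1, (0:Qt), fun c => if (j:ℕ) ≤ c.1 then dd k 1 + dd k (sg*tg) else 0) := by
  rw [sH3, Module.Basis.constr_basis]

lemma ifc_top (f : K4 → k) :
    (fun c : Fin (n+1) => if ((Fin.last (n+1) : Fin (n+2)):ℕ) ≤ c.1 then f else 0)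
      = (0 : Fin (n+1) → K4 → k) := by
  funext c
  rw [if_neg]
  · rfl
  · have := c.isLt; simp [Fin.val_last] <;> omega

lemma ifc_pair (i : Fin (n+2)) (h : i.1 < n+1) (f : K4 → k) :
    ((fun c : Fin (n+1) => if (i:ℕ) ≤ c.1 then f else 0)
      + fun c : Fin (n+1) => if ((⟨i.1+1, by omega⟩ : Fin (n+2)):ℕ) ≤ c.1 then f else 0)
      = sing ⟨i.1, h⟩ f := by
  funext c
  rw [Pi.add_apply]
  by_cases h1 : (i:ℕ) ≤ c.1
  · by_cases h2 : i.1 + 1 ≤ c.1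
    · rw [if_pos h1, if_pos (by simpa using h2), sing, if_neg (by rw [Fin.ext_iff]; simp <;> omega)]
      exact addSelf k f
    · rw [if_pos h1, if_neg (by simpa using h2), sing, if_pos (Fin.ext (by simp <;> omega)), add_zero]
  · rw [if_neg h1, if_neg (by simp <;> omega), sing, if_neg (by rw [Fin.ext_iff]; simp <;> omega), add_zero]

lemma piF_ifc (hV : IsVinf k (n+2) V B) (j : Fin (n+2)) :
    piF n B (fun c => if (j:ℕ) ≤ c.1 then dd k 1 + dd k (sg*tg) else 0)
      = B (Sum.inr j) + B (Sum.inr (Fin.last (n+1))) := by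
  have hbound : ∀ c : Fin (n+1), (c.castSucc).1 + 1 < n+2 := fun c => by
    have := c.isLt; simp <;> omega
  have hterm : ∀ c : Fin (n+1), (∑ g : K4,
      ((if (j:ℕ) ≤ c.1 then dd k 1 + dd k (sg*tg) else (0:K4 → k)) g
        • (g • B (Sum.inl c.castSucc))))
      = (if (j:ℕ) ≤ c.1 then
          B (Sum.inr ⟨min c.1 (n+1), by omega⟩)
            + B (Sum.inr ⟨min (c.1+1) (n+1), by omega⟩) else 0) := by
    intro c
    by_cases h : (j:ℕ) ≤ c.1
    · rw [if_pos h, if_pos h]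
      have hsplit : ∀ g : K4, (dd k 1 + dd k (sg*tg)) g • (g • B (Sum.inl c.castSucc))
          = dd k 1 g • (g • B (Sum.inl c.castSucc))
            + dd k (sg*tg) g • (g • B (Sum.inl c.castSucc)) := fun g => by
        rw [Pi.add_apply, add_smul]
      rw [Finset.sum_congr rfl (fun g _ => hsplit g), Finset.sum_add_distrib,
        sum_dd_smul, sum_dd_smul, one_smul, hst n B hV c.castSucc (hbound c), addSelf' k]
      congr 1
      · exact congrArg _ (congrArg _ (Fin.ext (by have := c.isLt; simp <;> omega)))
      · exact congrArg _ (congrArg _ (Fin.ext (by have := c.isLt; simp <;> omega)))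
    · rw [if_neg h, if_neg h]
      apply Finset.sum_eq_zero
      intro g _
      rw [Pi.zero_apply, zero_smul]
  rw [piF, sumMap_apply, Finset.sum_congr rfl (fun c _ => hterm c)]
  rw [Fin.sum_univ_eq_sum_range
    (fun t => if (j:ℕ) ≤ t then B (Sum.inr ⟨min t (n+1), by omega⟩)
      + B (Sum.inr ⟨min (t+1) (n+1), by omega⟩) else 0) (n+1)]
  rw [tele k (fun t => B (Sum.inr ⟨min t (n+1), by omega⟩)) (j:ℕ) (n+1)
    (by have := j.isLt; omega)]
  congr 1
  · exact congrArg _ (congrArg _ (Fin.ext (by have := j.isLt; simp <;> omega)))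
  · exact congrArg _ (congrArg _ (Fin.ext (by simp [Fin.val_last] <;> omega)))

lemma sH3_sect (hV : IsVinf k (n+2) V B) (v : V) :
    piMap n B Bt (sH3 n B Bt v) = v := by
  have h : (piMap n B Bt) ∘ₗ (sH3 n B Bt) = LinearMap.id := by
    apply B.ext; rintro (i | j)
    · rw [LinearMap.comp_apply, LinearMap.id_apply]
      by_cases h : i.1 < n+1
      · rw [sH3_al n B Bt i h, piMap_apply, map_zero (piQ1 n B Bt),
          map_zero (piQ2 n B Bt), piF_sing_dd, one_smul, zero_add, zero_add, cs_eq n i h]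
      · rw [last_top n i h, sH3_al_top, piMap_apply, map_zero (piQ2 n B Bt),
          map_zero (piF n B), piQ1_0, add_zero, add_zero]
    · rw [LinearMap.comp_apply, LinearMap.id_apply, sH3_ar, piMap_apply, piQ1_1,
        map_zero (piQ2 n B Bt), add_zero, piF_ifc n B hV, add_comm (B (Sum.inr j)),
        addSelf' k]
  simpa using DFunLike.congr_fun h v

lemma smul_ifc (g : K4) (j : Fin (n+2)) (f : K4 → k) :
    g • (fun c : Fin (n+1) => if (j:ℕ) ≤ c.1 then f else 0)
      = fun c : Fin (n+1) => if (j:ℕ) ≤ c.1 then g • f else 0 := by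
  funext c
  by_cases h : (j:ℕ) ≤ c.1 <;> simp [h]

lemma sH3_eqv (hV : IsVinf k (n+2) V B) (hQt : IsQtau k Qt Bt) (v : V) :
    sH3 n B Bt ((sg * tg) • v) = (sg * tg) • sH3 n B Bt v := by
  refine lin_equivariant_of_basis B _ (sg * tg) ?_ v
  rintro (i | j)
  · by_cases h : i.1 < n+1
    · rw [hst n B hV i (by omega), map_add, map_add, sH3_al n B Bt i h,
        sH3_ar n B Bt i, sH3_ar n B Bt ⟨i.1+1, by omega⟩]
      simp only [Prod.mk_add_mk, Prod.smul_mk, add_zero, smul_zero, zero_add]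
      refine triple_ext (addSelf k (Bt 1)) rfl ?_
      rw [ifc_pair n i h, ← sing_add, addSelf' k, smul_sing, smul_dd, mul_one]
    · rw [last_top n i h, hst_top n B hV, map_add, sH3_al_top,
        sH3_ar n B Bt (Fin.last (n+1)), ifc_top]
      simp only [Prod.mk_add_mk, Prod.smul_mk, add_zero, smul_zero, zero_add]
      refine triple_ext ?_ rfl rfl
      rw [mul_smul, hQt.2.1, hQt.1]
  · have e : (sg*tg) • B (Sum.inr j) = B (Sum.inr j) := by
      rw [mul_smul, hV.2.2.2, hV.2.2.1]
    rw [e, sH3_ar]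
    simp only [Prod.smul_mk, smul_zero]
    refine triple_ext ?_ rfl ?_
    · rw [mul_smul, hQt.2.2.2, hQt.2.2.1]
    · rw [smul_ifc, smul_add, smul_dd, smul_dd, mul_one, st_st, add_comm (dd k (sg*tg))]

-- ================= iota and rho =================

lemma z2 {M : Type} [AddCommGroup M] [Module k M] (v : M) : (2:ℤ) • v = 0 := by
  rw [two_zsmul]; exact addSelf k v

lemma z4 {M : Type} [AddCommGroup M] [Module k M] (v : M) : (4:ℤ) • v = 0 := by
  have h : (4:ℤ) = 2 + 2 := by norm_num
  rw [h, add_zsmul, z2 (k := k)]; simp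

lemma n2 {M : Type} [AddCommGroup M] [Module k M] (v : M) : (2:ℕ) • v = 0 := by
  rw [two_nsmul]; exact addSelf k v

lemma n4 {M : Type} [AddCommGroup M] [Module k M] (v : M) : (4:ℕ) • v = 0 := by
  have h : (4:ℕ) = 2 + 2 := by norm_num
  rw [h, add_nsmul, n2 (k := k)]; simp

noncomputable def iota : V →ₗ[k] Qt × Qt × (Fin (n+1) → K4 → k) :=
  B.constr ℕ fun idx =>
    match idx with
    | Sum.inl i =>
        if h0 : i.1 = 0 then (Bt 0, Bt 0, sing 0 (dd k 1 + dd k sg))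
        else if h : i.1 < n+1 then
          ((0:Qt), (0:Qt), sing ⟨i.1-1, by omega⟩ (dd k 1 + dd k tg)
            + sing ⟨i.1, h⟩ (dd k 1 + dd k sg))
        else (Bt 1, 0, sing (Fin.last n) (dd k 1 + dd k tg))
    | Sum.inr j =>
        if h0 : j.1 = 0 then (Bt 1, Bt 1, 0)
        else ((0:Qt), (0:Qt),
          sing ⟨j.1-1, by have := j.isLt; omega⟩
            (dd k 1 + dd k sg + dd k tg + dd k (sg*tg)))

lemma iota_a0 :
    iota n B Bt (B (Sum.inl (0 : Fin (n+2)))) = (Bt 0, Bt 0, sing 0 (dd k 1 + dd k sg)) := by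
  rw [iota, Module.Basis.constr_basis]; exact dif_pos (by simp)

lemma iota_mid (i : Fin (n+2)) (h0 : ¬ i.1 = 0) (h : i.1 < n+1) (hb : i.1 - 1 < n+1) :
    iota n B Bt (B (Sum.inl i))
      = ((0:Qt), (0:Qt), sing ⟨i.1-1, hb⟩ (dd k 1 + dd k tg)
          + sing ⟨i.1, h⟩ (dd k 1 + dd k sg)) := by
  rw [iota, Module.Basis.constr_basis]
  exact (dif_neg h0).trans (dif_pos h)

lemma iota_top :
    iota n B Bt (B (Sum.inl (Fin.last (n+1))))
      = (Bt 1, 0, sing (Fin.last n) (dd k 1 + dd k tg)) := by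
  rw [iota, Module.Basis.constr_basis]
  exact (dif_neg (by simp)).trans (dif_neg (by simp))

lemma iota_b0 :
    iota n B Bt (B (Sum.inr (0 : Fin (n+2)))) = (Bt 1, Bt 1, 0) := by
  rw [iota, Module.Basis.constr_basis]; exact dif_pos (by simp)

lemma iota_br (j : Fin (n+2)) (h0 : ¬ j.1 = 0) (hb : j.1 - 1 < n+1) :
    iota n B Bt (B (Sum.inr j))
      = ((0:Qt), (0:Qt),
          sing ⟨j.1-1, hb⟩ (dd k 1 + dd k sg + dd k tg + dd k (sg*tg))) := by
  rw [iota, Module.Basis.constr_basis]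
  exact dif_neg h0

noncomputable def Wr : Fin (n+1) → K4 → V := fun c g =>
  if g = tg then B (Sum.inl c.succ)
  else if g = sg * tg then B (Sum.inl c.succ) + B (Sum.inr c.succ) else 0

@[simp] lemma Wr_one (c : Fin (n+1)) : Wr n B c 1 = 0 := by
  rw [Wr]; rw [if_neg (by decide), if_neg (by decide)]
@[simp] lemma Wr_sg (c : Fin (n+1)) : Wr n B c sg = 0 := by
  rw [Wr]; rw [if_neg (by decide), if_neg (by decide)]
@[simp] lemma Wr_tg (c : Fin (n+1)) : Wr n B c tg = B (Sum.inl c.succ) := by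
  rw [Wr]; rw [if_pos rfl]
@[simp] lemma Wr_st (c : Fin (n+1)) :
    Wr n B c (sg*tg) = B (Sum.inl c.succ) + B (Sum.inr c.succ) := by
  rw [Wr]; rw [if_neg (by decide), if_pos rfl]

noncomputable def rho : (Qt × Qt × (Fin (n+1) → K4 → k)) →ₗ[k] V :=
  (Bt.constr ℕ ![B (Sum.inl (0:Fin (n+2))), B (Sum.inr (0:Fin (n+2)))]) ∘ₗ
    (LinearMap.fst k Qt (Fin (n+1) → K4 → k) ∘ₗ
      LinearMap.snd k Qt (Qt × (Fin (n+1) → K4 → k)))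
  + sumMap (Wr n B) ∘ₗ (LinearMap.snd k Qt (Fin (n+1) → K4 → k) ∘ₗ
      LinearMap.snd k Qt (Qt × (Fin (n+1) → K4 → k)))

lemma rho_apply (q1 q2 : Qt) (F : Fin (n+1) → K4 → k) :
    rho n B Bt (q1, q2, F)
      = (Bt.constr ℕ ![B (Sum.inl (0:Fin (n+2))), B (Sum.inr (0:Fin (n+2)))]) q2
        + sumMap (Wr n B) F := by
  simp [rho]

@[simp] lemma rC0 :
    (Bt.constr ℕ ![B (Sum.inl (0:Fin (n+2))), B (Sum.inr (0:Fin (n+2)))]) (Bt 0)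
      = B (Sum.inl (0:Fin (n+2))) := by simp
@[simp] lemma rC1 :
    (Bt.constr ℕ ![B (Sum.inl (0:Fin (n+2))), B (Sum.inr (0:Fin (n+2)))]) (Bt 1)
      = B (Sum.inr (0:Fin (n+2))) := by simp

lemma rho_iota (v : V) : rho n B Bt (iota n B Bt v) = v := by
  have h : (rho n B Bt) ∘ₗ (iota n B Bt) = LinearMap.id := by
    apply B.ext; rintro (i | j)
    · rw [LinearMap.comp_apply, LinearMap.id_apply]
      by_cases h0 : i.1 = 0
      · have hi : i = 0 := Fin.ext h0
        subst hi
        rw [iota_a0, rho_apply, rC0, sing_add, map_add, sumMap_sing_dd, sumMap_sing_dd,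
          Wr_one, Wr_sg, add_zero, add_zero]
      · by_cases h : i.1 < n+1
        · have hb : i.1 - 1 < n+1 := by omega
          rw [iota_mid n B Bt i h0 h hb, rho_apply, map_zero, zero_add, map_add,
            sing_add, sing_add, map_add, map_add, sumMap_sing_dd, sumMap_sing_dd,
            sumMap_sing_dd, sumMap_sing_dd, Wr_one, Wr_tg, Wr_one, Wr_sg, zero_add,
            add_zero, add_zero]
          exact congrArg _ (congrArg _ (Fin.ext (by simp <;> omega)))
        · rw [last_top n i h, iota_top, rho_apply, map_zero, zero_add, sing_add,
            map_add, sumMap_sing_dd, sumMap_sing_dd, Wr_one, Wr_tg, zero_add]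
          exact congrArg _ (congrArg _ (Fin.ext (by simp)))
    · rw [LinearMap.comp_apply, LinearMap.id_apply]
      by_cases h0 : j.1 = 0
      · have hj : j = 0 := Fin.ext h0
        subst hj
        rw [iota_b0, rho_apply, rC1, map_zero, add_zero]
      · have hb : j.1 - 1 < n+1 := by have := j.isLt; omega
        rw [iota_br n B Bt j h0 hb, rho_apply, map_zero, zero_add, sing_add, sing_add,
          sing_add, map_add, map_add, map_add, sumMap_sing_dd, sumMap_sing_dd,
          sumMap_sing_dd, sumMap_sing_dd, Wr_one, Wr_sg, Wr_tg, Wr_st, zero_add,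
          zero_add, addSelf' k]
        exact congrArg _ (congrArg _ (Fin.ext (by simp <;> omega)))
  simpa using DFunLike.congr_fun h v

lemma hsa' (hV : IsVinf k (n+2) V B) (c : Fin (n+1)) :
    sg • B (Sum.inl c.castSucc) = B (Sum.inl c.castSucc) + B (Sum.inr c.castSucc) :=
  hV.1 _

lemma hta' (hV : IsVinf k (n+2) V B) (c : Fin (n+1)) :
    tg • B (Sum.inl c.castSucc) = B (Sum.inl c.castSucc) + B (Sum.inr c.succ) := by
  have e : (⟨(c.castSucc).1 + 1, by have := c.isLt; simp <;> omega⟩ : Fin (n+2)) = c.succ :=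
    Fin.ext (by simp)
  rw [hta n B hV c.castSucc (by have := c.isLt; simp <;> omega), e]

lemma hst' (hV : IsVinf k (n+2) V B) (c : Fin (n+1)) :
    (sg*tg) • B (Sum.inl c.castSucc)
      = B (Sum.inl c.castSucc) + (B (Sum.inr c.castSucc) + B (Sum.inr c.succ)) := by
  have e : (⟨(c.castSucc).1 + 1, by have := c.isLt; simp <;> omega⟩ : Fin (n+2)) = c.succ :=
    Fin.ext (by simp)
  rw [hst n B hV c.castSucc (by have := c.isLt; simp <;> omega), e]

lemma pi_iota (hV : IsVinf k (n+2) V B) :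
    (piMap n B Bt) ∘ₗ (iota n B Bt) = 0 := by
  apply B.ext; rintro (i | j)
  · rw [LinearMap.comp_apply, LinearMap.zero_apply]
    by_cases h0 : i.1 = 0
    · have hi : i = 0 := Fin.ext h0
      subst hi
      rw [iota_a0, piMap_apply, piQ1_0, piQ2_0, sing_add, map_add, piF_sing_dd,
        piF_sing_dd, one_smul, hsa' n B hV 0]
      have e : (Fin.castSucc (0 : Fin (n+1))) = (0 : Fin (n+2)) := Fin.ext (by simp)
      rw [e]
      abel_nf
      simp [z2 (k := k), z4 (k := k), n2 (k := k), n4 (k := k), addSelf k]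
    · by_cases h : i.1 < n+1
      · have hb : i.1 - 1 < n+1 := by omega
        rw [iota_mid n B Bt i h0 h hb, piMap_apply, map_zero (piQ1 n B Bt),
          map_zero (piQ2 n B Bt), map_add, sing_add, sing_add, map_add, map_add,
          piF_sing_dd, piF_sing_dd, piF_sing_dd, piF_sing_dd, one_smul, one_smul,
          hta' n B hV ⟨i.1-1, hb⟩, hsa' n B hV ⟨i.1, h⟩]
        have e : (Fin.succ (⟨i.1-1, hb⟩ : Fin (n+1))) = Fin.castSucc (⟨i.1, h⟩ : Fin (n+1)) :=
          Fin.ext (by simp <;> omega)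
        rw [e]
        abel_nf
        simp [z2 (k := k), z4 (k := k), n2 (k := k), n4 (k := k), addSelf k]
      · rw [last_top n i h, iota_top, piMap_apply, piQ1_1, map_zero (piQ2 n B Bt),
          add_zero, sing_add, map_add, piF_sing_dd, piF_sing_dd, one_smul,
          hta' n B hV (Fin.last n)]
        have e : (Fin.succ (Fin.last n)) = Fin.last (n+1) := Fin.ext (by simp)
        rw [e]
        abel_nf
        simp [z2 (k := k), z4 (k := k), n2 (k := k), n4 (k := k), addSelf k]
  · rw [LinearMap.comp_apply, LinearMap.zero_apply]
    by_cases h0 : j.1 = 0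
    · have hj : j = 0 := Fin.ext h0
      subst hj
      rw [iota_b0, piMap_apply, piQ1_1, piQ2_1, map_zero (piF n B), add_zero,
        addSelf k]
    · have hb : j.1 - 1 < n+1 := by have := j.isLt; omega
      rw [iota_br n B Bt j h0 hb, piMap_apply, map_zero (piQ1 n B Bt),
        map_zero (piQ2 n B Bt), sing_add, sing_add, sing_add, map_add, map_add,
        map_add, piF_sing_dd, piF_sing_dd, piF_sing_dd, piF_sing_dd, one_smul,
        hsa' n B hV ⟨j.1-1, hb⟩, hta' n B hV ⟨j.1-1, hb⟩, hst' n B hV ⟨j.1-1, hb⟩]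
      abel_nf
      simp [z2 (k := k), z4 (k := k), n2 (k := k), n4 (k := k), addSelf k]

lemma iota_eqv_sg (hV : IsVinf k (n+2) V B) (hQt : IsQtau k Qt Bt) (v : V) :
    iota n B Bt (sg • v) = sg • iota n B Bt v := by
  refine lin_equivariant_of_basis B _ sg ?_ v
  rintro (i | j)
  · by_cases h0 : i.1 = 0
    · have hi : i = 0 := Fin.ext h0
      subst hi
      rw [hV.1, map_add, iota_a0, iota_b0]
      simp only [Prod.mk_add_mk, Prod.smul_mk, add_zero, smul_sing, smul_add, smul_dd,
        mul_one, sg_sg]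
      exact triple_ext (hQt.1).symm (hQt.1).symm (congrArg _ (by abel))
    · by_cases h : i.1 < n+1
      · have hb : i.1 - 1 < n+1 := by omega
        rw [hV.1, map_add, iota_mid n B Bt i h0 h hb, iota_br n B Bt i h0 hb]
        simp only [Prod.mk_add_mk, Prod.smul_mk, add_zero, zero_add, smul_zero,
          smul_add, smul_sing, smul_dd, mul_one, sg_sg, sg_st]
        refine triple_ext rfl rfl ?_
        rw [add_right_comm, ← sing_add]
        refine congrArg₂ (· + ·) (congrArg _ ?_) (congrArg _ ?_)
        · abel_nf
          simp [z2 (k := k), z4 (k := k), n2 (k := k), n4 (k := k), addSelf k]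
        · abel
      · rw [last_top n i h, hV.1, map_add, iota_top,
          iota_br n B Bt (Fin.last (n+1)) (by simp) (by simp)]
        simp only [Prod.mk_add_mk, Prod.smul_mk, add_zero, zero_add, smul_zero,
          smul_add, smul_sing, smul_dd, mul_one, sg_sg, sg_st]
        have e : (⟨(Fin.last (n+1)).1 - 1, by simp⟩ : Fin (n+1)) = Fin.last n :=
          Fin.ext (by simp)
        rw [e, ← sing_add]
        refine triple_ext (hQt.2.2.1).symm rfl (congrArg _ ?_)
        abel_nf
        simp [z2 (k := k), z4 (k := k), n2 (k := k), n4 (k := k), addSelf k]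
  · by_cases h0 : j.1 = 0
    · have hj : j = 0 := Fin.ext h0
      subst hj
      rw [hV.2.2.1, iota_b0]
      simp only [Prod.smul_mk, smul_zero]
      exact triple_ext (hQt.2.2.1).symm (hQt.2.2.1).symm rfl
    · have hb : j.1 - 1 < n+1 := by have := j.isLt; omega
      rw [hV.2.2.1, iota_br n B Bt j h0 hb]
      simp only [Prod.smul_mk, smul_zero, smul_sing, smul_add, smul_dd, mul_one,
        sg_sg, sg_st]
      exact triple_ext rfl rfl (congrArg _ (by abel))

lemma iota_eqv_tg (hV : IsVinf k (n+2) V B) (hQt : IsQtau k Qt Bt) (v : V) :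
    iota n B Bt (tg • v) = tg • iota n B Bt v := by
  refine lin_equivariant_of_basis B _ tg ?_ v
  rintro (i | j)
  · by_cases h0 : i.1 = 0
    · have hi : i = 0 := Fin.ext h0
      subst hi
      rw [hta n B hV 0 (by simp <;> omega), map_add, iota_a0,
        iota_br n B Bt ⟨(0:Fin (n+2)).1 + 1, by simp <;> omega⟩ (by simp) (by simp <;> omega)]
      have e : (⟨((⟨(0:Fin (n+2)).1 + 1, by simp <;> omega⟩ : Fin (n+2))).1 - 1,
          by simp <;> omega⟩ : Fin (n+1)) = 0 := Fin.ext (by simp)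
      rw [e]
      simp only [Prod.mk_add_mk, Prod.smul_mk, add_zero, smul_sing, smul_add, smul_dd,
        mul_one, tg_tg, tg_sg]
      refine triple_ext (hQt.2.1).symm (hQt.2.1).symm ?_
      rw [← sing_add]
      refine congrArg _ ?_
      abel_nf
      simp [z2 (k := k), z4 (k := k), n2 (k := k), n4 (k := k), addSelf k]
    · by_cases h : i.1 < n+1
      · have hb : i.1 - 1 < n+1 := by omega
        rw [hta n B hV i (by omega), map_add, iota_mid n B Bt i h0 h hb,
          iota_br n B Bt ⟨i.1 + 1, by omega⟩ (by simp) (by simp <;> omega)]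
        have e : (⟨((⟨i.1 + 1, by omega⟩ : Fin (n+2))).1 - 1, by simp <;> omega⟩
            : Fin (n+1)) = ⟨i.1, h⟩ := Fin.ext (by simp)
        rw [e]
        simp only [Prod.mk_add_mk, Prod.smul_mk, add_zero, zero_add, smul_zero,
          smul_add, smul_sing, smul_dd, mul_one, tg_tg, tg_sg]
        refine triple_ext rfl rfl ?_
        rw [add_assoc, ← sing_add]
        refine congrArg₂ (· + ·) (congrArg _ ?_) (congrArg _ ?_)
        · abel
        · abel_nf
          simp [z2 (k := k), z4 (k := k), n2 (k := k), n4 (k := k), addSelf k]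
      · rw [last_top n i h, hta_top n B hV, iota_top]
        simp only [Prod.smul_mk, smul_zero, smul_sing, smul_add, smul_dd, mul_one,
          tg_tg]
        exact triple_ext (hQt.2.2.2).symm rfl (congrArg _ (by abel))
  · by_cases h0 : j.1 = 0
    · have hj : j = 0 := Fin.ext h0
      subst hj
      rw [hV.2.2.2, iota_b0]
      simp only [Prod.smul_mk, smul_zero]
      exact triple_ext (hQt.2.2.2).symm (hQt.2.2.2).symm rfl
    · have hb : j.1 - 1 < n+1 := by have := j.isLt; omega
      rw [hV.2.2.2, iota_br n B Bt j h0 hb]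
      simp only [Prod.smul_mk, smul_zero, smul_sing, smul_add, smul_dd, mul_one,
        tg_tg, tg_sg, tg_st]
      exact triple_ext rfl rfl (congrArg _ (by abel))

end Main
end S9


/-- For every `n ≥ 2` there is a surjective `kG`-homomorphism
`π : Q_τ ⊕ Q_τ ⊕ (kG)^{n-1} → V_{2n,∞}` which splits on restriction to each of
`H₁, H₂, H₃` and whose kernel is isomorphic as a `kG`-module to `V_{2n,∞}` itself
(realized via an injective equivariant map `ι : V → domain` with range `ker π`). The
free module `(kG)^{n-1}` is realized as `Fin (n-1) → (K4 → k)` with the left regular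
action `(g • F) i x = F i (g⁻¹x)`. -/
theorem stmt9 (k : Type) [Field k] [CharP k 2] (n : ℕ) (hn : 2 ≤ n)
    (V : Type) [AddCommGroup V] [Module k V] [DistribMulAction K4 V] [SMulCommClass K4 k V]
    (B : Module.Basis (Fin n ⊕ Fin n) k V) (hV : IsVinf k n V B)
    (Qt : Type) [AddCommGroup Qt] [Module k Qt] [DistribMulAction K4 Qt]
    [SMulCommClass K4 k Qt] (Bt : Module.Basis (Fin 2) k Qt) (hQt : IsQtau k Qt Bt) :
    ∃ π : (Qt × Qt × (Fin (n - 1) → K4 → k)) →ₗ[k] V,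
      Function.Surjective π ∧
      (∀ (g : K4) (q : Qt × Qt × (Fin (n - 1) → K4 → k)),
        π (g • q.1, g • q.2.1, fun i x => q.2.2 i (g⁻¹ * x)) = g • π q) ∧
      (∀ H ∈ ({H1, H2, H3} : Set (Subgroup K4)),
        ∃ s : V →ₗ[k] (Qt × Qt × (Fin (n - 1) → K4 → k)),
          (∀ v : V, π (s v) = v) ∧
          (∀ h ∈ H, ∀ v : V,
            s (h • v) = (h • (s v).1, h • (s v).2.1, fun i x => (s v).2.2 i (h⁻¹ * x)))) ∧
      ∃ ι : V →ₗ[k] (Qt × Qt × (Fin (n - 1) → K4 → k)),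
        Function.Injective ι ∧
        (∀ (g : K4) (v : V),
          ι (g • v) = (g • (ι v).1, g • (ι v).2.1, fun i x => (ι v).2.2 i (g⁻¹ * x))) ∧
        LinearMap.range ι = LinearMap.ker π := by
  obtain ⟨m, rfl⟩ : ∃ m, n = m + 2 := ⟨n - 2, by omega⟩
  have hinj : Function.Injective (S9.iota m B Bt) := by
    intro u v huv
    rw [← S9.rho_iota m B Bt u, ← S9.rho_iota m B Bt v, huv]
  refine ⟨S9.piMap m B Bt, S9.piMap_surj m B Bt hV, ?_, ?_, S9.iota m B Bt, hinj, ?_, ?_⟩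
  · intro g q
    exact S9.piMap_eqv m B Bt hV hQt g q
  · intro H hH
    simp only [Set.mem_insert_iff, Set.mem_singleton_iff] at hH
    rcases hH with rfl | rfl | rfl
    · refine ⟨S9.sH1 m B Bt, fun v => S9.sH1_sect m B Bt hV v, ?_⟩
      intro h hh v
      rcases S9.mem_zpowers_k4 hh with rfl | rfl
      · rw [one_smul]
        exact (one_smul K4 (S9.sH1 m B Bt v)).symm
      · exact S9.sH1_eqv m B Bt hV hQt v
    · refine ⟨S9.sH2 m B Bt, fun v => S9.sH2_sect m B Bt hV v, ?_⟩
      intro h hh v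
      rcases S9.mem_zpowers_k4 hh with rfl | rfl
      · rw [one_smul]
        exact (one_smul K4 (S9.sH2 m B Bt v)).symm
      · exact S9.sH2_eqv m B Bt hV hQt v
    · refine ⟨S9.sH3 m B Bt, fun v => S9.sH3_sect m B Bt hV v, ?_⟩
      intro h hh v
      rcases S9.mem_zpowers_k4 hh with rfl | rfl
      · rw [one_smul]
        exact (one_smul K4 (S9.sH3 m B Bt v)).symm
      · exact S9.sH3_eqv m B Bt hV hQt v
  · intro g v
    exact S9.equivariant_all (S9.iota m B Bt) (S9.iota_eqv_sg m B Bt hV hQt)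
      (S9.iota_eqv_tg m B Bt hV hQt) g v
  · haveI : Module.Finite k V := Module.Finite.of_basis B
    haveI : Module.Finite k Qt := Module.Finite.of_basis Bt
    have hcomp := S9.pi_iota m B Bt hV
    have hle : LinearMap.range (S9.iota m B Bt) ≤ LinearMap.ker (S9.piMap m B Bt) := by
      rintro _ ⟨v, rfl⟩
      rw [LinearMap.mem_ker]
      have := DFunLike.congr_fun hcomp v
      simpa using this
    have fV : Module.finrank k V = (m+2) + (m+2) := by
      rw [Module.finrank_eq_card_basis B]; simp
    have c4 : Fintype.card K4 = 4 := rfl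
    have fD : Module.finrank k (Qt × Qt × (Fin (m+1) → K4 → k)) = 2 + (2 + (m+1) * 4) := by
      rw [Module.finrank_prod, Module.finrank_prod, Module.finrank_eq_card_basis Bt]
      congr 1
      congr 1
      rw [Module.finrank_pi_fintype]
      simp [Module.finrank_pi, c4, Finset.sum_const, mul_comm]
    have hrk := LinearMap.finrank_range_add_finrank_ker (S9.piMap m B Bt)
    rw [LinearMap.range_eq_top.mpr (S9.piMap_surj m B Bt hV), finrank_top, fV, fD] at hrk
    have hkr : Module.finrank k (LinearMap.ker (S9.piMap m B Bt)) = (m+2)+(m+2) := by omega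
    have hir : Module.finrank k (LinearMap.range (S9.iota m B Bt)) = (m+2)+(m+2) := by
      rw [LinearMap.finrank_range_of_inj hinj, fV]
    exact Submodule.eq_of_le_of_finrank_le hle (le_of_eq (hkr.trans hir.symm))
end

section
/- For every n ≥ 0, the k-linear dual of V_{2n+1}, equipped with the contragredient G-action, is isomorphic as a kG-module to V_{−(2n+1)}. -/
@[simp]
theorem distribMulAction_toLinearMap_apply_K4 (k : Type) [Field k] (V : Type) [AddCommGroup V]
    [Module k V] [DistribMulAction K4 V] [SMulCommClass K4 k V] (g : K4) (x : V) :
    DistribMulAction.toLinearMap k V g x = g • x := rfl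

/-- For every `n ≥ 0`, the `k`-linear dual of `V_{2n+1}`, with the contragredient
`G`-action `(g • f)(x) = f(g⁻¹ • x)`, is isomorphic as a `kG`-module to `V_{-(2n+1)}`. -/
theorem stmt12 (k : Type) [Field k] [CharP k 2] (n : ℕ)
    (V : Type) [AddCommGroup V] [Module k V] [DistribMulAction K4 V] [SMulCommClass K4 k V]
    (BV : Module.Basis (Fin (n + 1) ⊕ Fin n) k V) (hV : IsVpos k n V BV)
    (W : Type) [AddCommGroup W] [Module k W] [DistribMulAction K4 W] [SMulCommClass K4 k W]
    (BW : Module.Basis (Fin n ⊕ Fin (n + 1)) k W) (hW : IsVneg k n W BW) :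
    ∃ e : (V →ₗ[k] k) ≃ₗ[k] W,
      ∀ (g : K4) (f : V →ₗ[k] k),
        e (f ∘ₗ DistribMulAction.toLinearMap k V g⁻¹) = g • e f := by
  classical
  obtain ⟨h1, h2, h3, h4, h5, h6⟩ := hV
  obtain ⟨w1, w2, w3, w4⟩ := hW
  set φ : (Fin (n+1) ⊕ Fin n) ≃ (Fin n ⊕ Fin (n+1)) :=
    (Equiv.sumCongr Fin.revPerm Fin.revPerm).trans (Equiv.sumComm _ _) with hφ
  have hφl : ∀ j : Fin (n+1), φ (Sum.inl j) = Sum.inr j.rev := fun _ => rfl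
  have hφr : ∀ i : Fin n, φ (Sum.inr i) = Sum.inl i.rev := fun _ => rfl
  set e : (V →ₗ[k] k) ≃ₗ[k] W := BV.dualBasis.equiv BW φ with he_def
  have he : ∀ m, e (BV.dualBasis m) = BW (φ m) := fun m => BV.dualBasis.equiv_apply m BW φ
  refine ⟨e, ?_⟩
  have hsg_inv : sg⁻¹ = sg := by decide
  have htg_inv : tg⁻¹ = tg := by decide
  -- reduce to checking on the dual basis
  have key : ∀ g : K4,
      (∀ m, e (BV.dualBasis m ∘ₗ DistribMulAction.toLinearMap k V g⁻¹)
        = g • e (BV.dualBasis m)) →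
      ∀ f : V →ₗ[k] k,
        e (f ∘ₗ DistribMulAction.toLinearMap k V g⁻¹) = g • e f := by
    intro g hgen f
    have hL : (e.toLinearMap ∘ₗ (DistribMulAction.toLinearMap k V g⁻¹).lcomp k k)
        = DistribMulAction.toLinearMap k W g ∘ₗ e.toLinearMap := by
      apply BV.dualBasis.ext
      intro m
      simpa [LinearMap.lcomp_apply'] using hgen m
    simpa [LinearMap.lcomp_apply'] using LinearMap.congr_fun hL f
  -- the sg case
  have Psg : ∀ f : V →ₗ[k] k,
      e (f ∘ₗ DistribMulAction.toLinearMap k V sg⁻¹) = sg • e f := by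
    apply key
    intro m
    rw [hsg_inv]
    rcases m with j | i
    · have hcomp : BV.dualBasis (Sum.inl j) ∘ₗ DistribMulAction.toLinearMap k V sg
          = BV.dualBasis (Sum.inl j) := by
        apply BV.ext
        intro p
        rcases p with j' | i'
        · rcases Fin.eq_zero_or_eq_succ j' with rfl | ⟨i, rfl⟩
          · simp [h1]
          · simp [h2 i, Module.Basis.dualBasis_apply_self, Finsupp.single_apply]
        · simp [h5 i']
      rw [hcomp, he, hφl j, w3 j.rev]
    · have hcomp : BV.dualBasis (Sum.inr i) ∘ₗ DistribMulAction.toLinearMap k V sg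
          = BV.dualBasis (Sum.inr i) + BV.dualBasis (Sum.inl i.succ) := by
        apply BV.ext
        intro p
        rcases p with j' | i'
        · rcases Fin.eq_zero_or_eq_succ j' with rfl | ⟨i', rfl⟩
          · simp [h1, Module.Basis.dualBasis_apply_self, Finsupp.single_apply,
              (Fin.succ_ne_zero i).symm]
          · simp [h2 i', Module.Basis.dualBasis_apply_self, Finsupp.single_apply, Fin.succ_inj]
        · simp [h5 i', Module.Basis.dualBasis_apply_self, Finsupp.single_apply]
      rw [hcomp, map_add, he, he, hφr i, hφl i.succ, Fin.rev_succ, w1 i.rev]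
  -- the tg case
  have Ptg : ∀ f : V →ₗ[k] k,
      e (f ∘ₗ DistribMulAction.toLinearMap k V tg⁻¹) = tg • e f := by
    apply key
    intro m
    rw [htg_inv]
    rcases m with j | i
    · have hcomp : BV.dualBasis (Sum.inl j) ∘ₗ DistribMulAction.toLinearMap k V tg
          = BV.dualBasis (Sum.inl j) := by
        apply BV.ext
        intro p
        rcases p with j' | i'
        · rcases Fin.eq_castSucc_or_eq_last j' with ⟨i, rfl⟩ | rfl
          · simp [h3 i, Module.Basis.dualBasis_apply_self, Finsupp.single_apply]
          · simp [h4]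
        · simp [h6 i']
      rw [hcomp, he, hφl j, w4 j.rev]
    · have hcomp : BV.dualBasis (Sum.inr i) ∘ₗ DistribMulAction.toLinearMap k V tg
          = BV.dualBasis (Sum.inr i) + BV.dualBasis (Sum.inl i.castSucc) := by
        apply BV.ext
        intro p
        rcases p with j' | i'
        · rcases Fin.eq_castSucc_or_eq_last j' with ⟨i', rfl⟩ | rfl
          · simp [h3 i', Module.Basis.dualBasis_apply_self, Finsupp.single_apply, Fin.castSucc_inj]
          · simp [h4, Module.Basis.dualBasis_apply_self, Finsupp.single_apply,
              (Fin.castSucc_lt_last i).ne']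
        · simp [h6 i', Module.Basis.dualBasis_apply_self, Finsupp.single_apply]
      rw [hcomp, map_add, he, he, hφr i, hφl i.castSucc, Fin.rev_castSucc, w2 i.rev]
  -- assemble: every element of K4 is 1, sg, tg or sg * tg
  intro g f
  have hcases : g = 1 ∨ g = sg ∨ g = tg ∨ g = sg * tg := by
    revert g; decide
  have Pmul : ∀ (g₁ g₂ : K4),
      (∀ f : V →ₗ[k] k, e (f ∘ₗ DistribMulAction.toLinearMap k V g₁⁻¹) = g₁ • e f) →
      (∀ f : V →ₗ[k] k, e (f ∘ₗ DistribMulAction.toLinearMap k V g₂⁻¹) = g₂ • e f) →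
      ∀ f : V →ₗ[k] k,
        e (f ∘ₗ DistribMulAction.toLinearMap k V (g₁ * g₂)⁻¹) = (g₁ * g₂) • e f := by
    intro g₁ g₂ P1 P2 f
    have hT : (f ∘ₗ DistribMulAction.toLinearMap k V (g₁ * g₂)⁻¹)
        = (f ∘ₗ DistribMulAction.toLinearMap k V g₂⁻¹)
            ∘ₗ DistribMulAction.toLinearMap k V g₁⁻¹ := by
      apply LinearMap.ext
      intro x
      simp [mul_inv_rev, mul_smul]
    rw [hT, P1, P2, mul_smul]
  rcases hcases with rfl | rfl | rfl | rfl
  · have : (DistribMulAction.toLinearMap k V (1 : K4)⁻¹) = LinearMap.id := by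
      apply LinearMap.ext; intro x; simp
    rw [this, LinearMap.comp_id, one_smul]
  · exact Psg f
  · exact Ptg f
  · exact Pmul sg tg Psg Ptg f
end

section
/- For every n ≥ 0, the kG-module V_{−(2n+1)} is indecomposable: it cannot be written as the internal direct sum of two nonzero kG-submodules. -/
set_option linter.unusedSectionVars false

section aux
variable {k : Type} [Field k] {n : ℕ}
    {V : Type} [AddCommGroup V] [Module k V] [DistribMulAction K4 V] [SMulCommClass K4 k V]
    (B : Module.Basis (Fin n ⊕ Fin (n + 1)) k V)

noncomputable def wvec (u : Fin (n + 1) → k) : V := ∑ m, u m • B (Sum.inr m)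

lemma repr_wvec (u : Fin (n + 1) → k) (m : Fin (n + 1)) :
    B.repr (wvec B u) (Sum.inr m) = u m := by
  simp [wvec, Finsupp.finset_sum_apply, Module.Basis.repr_self, Finsupp.single_apply]

lemma wvec_inj {u u' : Fin (n + 1) → k} (h : wvec B u = wvec B u') : u = u' := by
  funext m
  have := congrArg (fun v => B.repr v (Sum.inr m)) h
  simpa [repr_wvec] using this

lemma wvec_single (m0 : Fin (n + 1)) (c : k) :
    wvec B (fun m => if m = m0 then c else 0) = c • B (Sum.inr m0) := by
  simp [wvec, Finset.sum_ite_eq']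

lemma wvec_snoc (u : Fin n → k) :
    wvec B (Fin.snoc u 0) = ∑ i : Fin n, u i • B (Sum.inr i.castSucc) := by
  rw [wvec, Fin.sum_univ_castSucc]; simp

lemma wvec_cons (u : Fin n → k) :
    wvec B (Fin.cons 0 u) = ∑ i : Fin n, u i • B (Sum.inr i.succ) := by
  rw [wvec, Fin.sum_univ_succ]; simp

noncomputable def Wsub : Submodule k V :=
  Submodule.span k (Set.range fun m : Fin (n + 1) => B (Sum.inr m))

lemma wvec_mem (u : Fin (n + 1) → k) : wvec B u ∈ Wsub B :=
  Submodule.sum_mem _ fun m _ => Submodule.smul_mem _ _ (Submodule.subset_span ⟨m, rfl⟩)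

lemma sub_mem_W (v : V) :
    v - ∑ i : Fin n, B.repr v (Sum.inl i) • B (Sum.inl i) ∈ Wsub B := by
  have h := B.sum_repr v
  rw [Fintype.sum_sum_type] at h
  have : v - ∑ i : Fin n, B.repr v (Sum.inl i) • B (Sum.inl i)
      = wvec B (fun m => B.repr v (Sum.inr m)) := by
    rw [wvec]; linear_combination (norm := module) h.symm
  rw [this]; exact wvec_mem B _

lemma main_lemma (hV : IsVneg k n V B) (φ : V →ₗ[k] V)
    (hφ : ∀ g : K4, ∀ v : V, φ (g • v) = g • φ v) :
    ∃ c : k, (∀ m, φ (B (Sum.inr m)) = c • B (Sum.inr m)) ∧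
      (∀ j, φ (B (Sum.inl j)) - c • B (Sum.inl j) ∈ Wsub B) := by
  obtain ⟨hs, ht, hbs, hbt⟩ := hV
  -- the "X" and "Y" operators
  have hX : ∀ v : V, sg • v - v =
      ∑ i : Fin n, B.repr v (Sum.inl i) • B (Sum.inr i.castSucc) := by
    intro v
    set L : V →ₗ[k] V := DistribSMul.toLinearMap k V sg - LinearMap.id with hL
    have hLa : ∀ i : Fin n, L (B (Sum.inl i)) = B (Sum.inr i.castSucc) := by
      intro i
      simp only [hL, LinearMap.sub_apply, DistribSMul.toLinearMap_apply, LinearMap.id_apply,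
        hs i]
      abel
    have hLb : ∀ m : Fin (n + 1), L (B (Sum.inr m)) = 0 := by
      intro m
      simp [hL, hbs m]
    have : sg • v - v = L v := rfl
    rw [this]
    conv_lhs => rw [← B.sum_repr v]
    rw [map_sum, Fintype.sum_sum_type]
    simp only [map_smul, hLa, hLb, smul_zero, Finset.sum_const_zero, add_zero]
  have hY : ∀ v : V, tg • v - v =
      ∑ i : Fin n, B.repr v (Sum.inl i) • B (Sum.inr i.succ) := by
    intro v
    set L : V →ₗ[k] V := DistribSMul.toLinearMap k V tg - LinearMap.id with hL
    have hLa : ∀ i : Fin n, L (B (Sum.inl i)) = B (Sum.inr i.succ) := by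
      intro i
      simp only [hL, LinearMap.sub_apply, DistribSMul.toLinearMap_apply, LinearMap.id_apply,
        ht i]
      abel
    have hLb : ∀ m : Fin (n + 1), L (B (Sum.inr m)) = 0 := by
      intro m
      simp [hL, hbt m]
    have : tg • v - v = L v := rfl
    rw [this]
    conv_lhs => rw [← B.sum_repr v]
    rw [map_sum, Fintype.sum_sum_type]
    simp only [map_smul, hLa, hLb, smul_zero, Finset.sum_const_zero, add_zero]
  set p : Fin n → Fin n → k := fun j i => B.repr (φ (B (Sum.inl j))) (Sum.inl i) with hp
  have Eq1 : ∀ j : Fin n, φ (B (Sum.inr j.castSucc)) = wvec B (Fin.snoc (p j) 0) := by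
    intro j
    have h1 : B (Sum.inr j.castSucc) = sg • B (Sum.inl j) - B (Sum.inl j) := by
      rw [hs j]; abel
    rw [h1, map_sub, hφ, hX (φ (B (Sum.inl j))), wvec_snoc]
  have Eq2 : ∀ j : Fin n, φ (B (Sum.inr j.succ)) = wvec B (Fin.cons 0 (p j)) := by
    intro j
    have h1 : B (Sum.inr j.succ) = tg • B (Sum.inl j) - B (Sum.inl j) := by
      rw [ht j]; abel
    rw [h1, map_sub, hφ, hY (φ (B (Sum.inl j))), wvec_cons]
  -- case split on n
  cases n with
  | zero =>
    refine ⟨B.repr (φ (B (Sum.inr 0))) (Sum.inr 0), ?_, fun j => j.elim0⟩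
    intro m
    have hm : m = 0 := Fin.ext (by omega)
    subst hm
    have h := B.sum_repr (φ (B (Sum.inr 0)))
    rw [Fintype.sum_sum_type] at h
    simpa [Fin.sum_univ_succ] using h.symm
  | succ N =>
    have key : ∀ j j' : Fin (N + 1), (j : ℕ) + 1 = (j' : ℕ) →
        (Fin.snoc (p j') (0 : k) : Fin (N + 2) → k) = Fin.cons (0 : k) (p j) := by
      intro j j' hjj
      apply wvec_inj B
      rw [← Eq1 j', ← Eq2 j]
      have e : Fin.castSucc j' = Fin.succ j := by
        apply Fin.ext
        simp only [Fin.coe_castSucc, Fin.val_succ]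
        omega
      rw [e]
    have hrel0 : ∀ j j' : Fin (N + 1), (j : ℕ) + 1 = (j' : ℕ) → p j' 0 = 0 := by
      intro j j' hjj
      have h2 := congrFun (key j j' hjj) (Fin.castSucc 0)
      rw [Fin.snoc_castSucc] at h2
      rw [Fin.castSucc_zero, Fin.cons_zero] at h2
      exact h2
    have hrelT : ∀ j j' i i' : Fin (N + 1), (j : ℕ) + 1 = (j' : ℕ) →
        (i : ℕ) + 1 = (i' : ℕ) → p j' i' = p j i := by
      intro j j' i i' hjj hii
      have e : Fin.castSucc i' = Fin.succ i := Fin.ext (by simp [hii])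
      have h2 := congrFun (key j j' hjj) (Fin.castSucc i')
      rw [Fin.snoc_castSucc] at h2
      rw [e, Fin.cons_succ] at h2
      exact h2
    have hrelC : ∀ j j' : Fin (N + 1), (j : ℕ) + 1 = (j' : ℕ) → p j (Fin.last N) = 0 := by
      intro j j' hjj
      have h2 := congrFun (key j j' hjj) (Fin.last (N + 1))
      rw [Fin.snoc_last, ← Fin.succ_last, Fin.cons_succ] at h2
      exact h2.symm
    have shift : ∀ t a b : ℕ, (hat : a + t < N + 1) → (hbt : b + t < N + 1) →
        p ⟨a + t, hat⟩ ⟨b + t, hbt⟩ =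
          p ⟨a, lt_of_le_of_lt (Nat.le_add_right a t) hat⟩
            ⟨b, lt_of_le_of_lt (Nat.le_add_right b t) hbt⟩ := by
      intro t
      induction t with
      | zero => intro a b ha hb; rfl
      | succ t ih =>
        intro a b ha hb
        have ha' : a + t < N + 1 := lt_trans (Nat.lt_succ_self _) ha
        have hb' : b + t < N + 1 := lt_trans (Nat.lt_succ_self _) hb
        have step := hrelT ⟨a + t, ha'⟩ ⟨a + t + 1, ha⟩ ⟨b + t, hb'⟩ ⟨b + t + 1, hb⟩ rfl rfl
        exact step.trans (ih a b ha' hb')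
    set c : k := p 0 0 with hc
    have hpc : ∀ j i : Fin (N + 1), p j i = if i = j then c else 0 := by
      intro j i
      split
      next h =>
        subst h
        have := shift i.val 0 0 (by simpa using i.isLt) (by simpa using i.isLt)
        simpa using this
      next h =>
        rcases Nat.lt_or_ge i.val j.val with hlt | hge
        · -- below the diagonal
          have hd : (j : ℕ) - (i : ℕ) + (i : ℕ) = (j : ℕ) :=
            Nat.sub_add_cancel (le_of_lt hlt)
          have hb1 : (j : ℕ) - (i : ℕ) + (i : ℕ) < N + 1 := by rw [hd]; exact j.isLt
          have hb2 : 0 + (i : ℕ) < N + 1 := by simpa using i.isLt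
          have h1 := shift i.val (j.val - i.val) 0 hb1 hb2
          have ej : j = ⟨(j : ℕ) - (i : ℕ) + (i : ℕ), hb1⟩ := Fin.ext hd.symm
          have ei : i = ⟨0 + (i : ℕ), hb2⟩ := Fin.ext (Nat.zero_add _).symm
          rw [← ej, ← ei] at h1
          rw [h1]
          have hd1 : (j : ℕ) - (i : ℕ) - 1 + 1 = (j : ℕ) - (i : ℕ) :=
            by omega
          exact hrel0 ⟨(j : ℕ) - (i : ℕ) - 1, by omega⟩ ⟨(j : ℕ) - (i : ℕ), by omega⟩ hd1
        · -- above the diagonal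
          have hlt2 : (j : ℕ) < (i : ℕ) := by
            rcases Nat.lt_or_ge j.val i.val with h' | h'
            · exact h'
            · exact absurd (Fin.ext (le_antisymm h' hge)) h
          have hbi : (i : ℕ) + (N - (i : ℕ)) < N + 1 := by omega
          have hbj : (j : ℕ) + (N - (i : ℕ)) < N + 1 := by omega
          have h1 := shift (N - i.val) j.val i.val hbj hbi
          have ei : (⟨(i : ℕ) + (N - (i : ℕ)), hbi⟩ : Fin (N + 1)) = Fin.last N :=
            Fin.ext (by simp; omega)
          have ej : (⟨(j : ℕ), j.isLt⟩ : Fin (N + 1)) = j := Fin.eta j j.isLt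
          have eii : (⟨(i : ℕ), i.isLt⟩ : Fin (N + 1)) = i := Fin.eta i i.isLt
          rw [ei, ej, eii] at h1
          rw [← h1]
          exact hrelC ⟨(j : ℕ) + (N - (i : ℕ)), hbj⟩
            ⟨(j : ℕ) + (N - (i : ℕ)) + 1, by omega⟩ rfl
    refine ⟨c, ?_, ?_⟩
    · intro m
      rcases Fin.eq_castSucc_or_eq_last m with ⟨j, rfl⟩ | rfl
      · rw [Eq1 j]
        have hfun : Fin.snoc (p j) (0 : k) =
            fun m' => if m' = Fin.castSucc j then c else 0 := by
          funext m'
          refine Fin.lastCases ?_ ?_ m'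
          · rw [Fin.snoc_last, if_neg (Fin.castSucc_lt_last j).ne']
          · intro i
            rw [Fin.snoc_castSucc, hpc, if_congr Fin.castSucc_inj rfl rfl]
        rw [hfun, wvec_single]
      · have e : Fin.last (N + 1) = (Fin.last N).succ := (Fin.succ_last N).symm
        rw [e, Eq2 (Fin.last N)]
        have hfun : Fin.cons (0 : k) (p (Fin.last N)) =
            fun m' => if m' = (Fin.last N).succ then c else 0 := by
          funext m'
          refine Fin.cases ?_ ?_ m'
          · rw [Fin.cons_zero, if_neg (Fin.succ_ne_zero (Fin.last N)).symm]
          · intro i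
            rw [Fin.cons_succ, hpc, if_congr (Fin.succ_inj) rfl rfl]
        rw [hfun, wvec_single]
    · intro j
      have h := sub_mem_W B (φ (B (Sum.inl j)))
      have hsum : ∑ i : Fin (N + 1), B.repr (φ (B (Sum.inl j))) (Sum.inl i) • B (Sum.inl i)
          = c • B (Sum.inl j) := by
        have : ∀ i : Fin (N + 1), B.repr (φ (B (Sum.inl j))) (Sum.inl i) = p j i := fun _ => rfl
        simp only [this, hpc, ite_smul, zero_smul]
        rw [Finset.sum_ite_eq' Finset.univ j (fun i => c • B (Sum.inl i))]
        simp
      rw [hsum] at h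
      exact h

lemma zero_lemma (φ : V →ₗ[k] V) (h1 : ∀ m, φ (B (Sum.inr m)) = 0)
    (h2 : ∀ j, φ (B (Sum.inl j)) ∈ Wsub B) (hid : ∀ v, φ (φ v) = φ v) :
    φ = 0 := by
  have hW : ∀ w ∈ Wsub B, φ w = 0 := by
    intro w hw
    have hle : Wsub B ≤ LinearMap.ker φ := by
      rw [Wsub, Submodule.span_le]
      rintro x ⟨m, rfl⟩
      exact h1 m
    exact hle hw
  apply B.ext
  rintro (j | m)
  · rw [LinearMap.zero_apply, ← hid (B (Sum.inl j))]
    exact hW _ (h2 j)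
  · rw [LinearMap.zero_apply]
    exact h1 m

end aux

/-- For every `n ≥ 0`, the `kG`-module `V_{-(2n+1)}` is indecomposable: it is not the
internal direct sum of two nonzero `kG`-submodules (`G`-invariant `k`-subspaces). -/
theorem stmt14 (k : Type) [Field k] [CharP k 2] (n : ℕ)
    (V : Type) [AddCommGroup V] [Module k V] [DistribMulAction K4 V] [SMulCommClass K4 k V]
    (B : Module.Basis (Fin n ⊕ Fin (n + 1)) k V) (hV : IsVneg k n V B) :
    ¬ ∃ S T : Submodule k V,
        (∀ g : K4, ∀ v ∈ S, g • v ∈ S) ∧ (∀ g : K4, ∀ v ∈ T, g • v ∈ T) ∧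
        S ≠ ⊥ ∧ T ≠ ⊥ ∧ S ⊓ T = ⊥ ∧ S ⊔ T = ⊤ := by
  rintro ⟨S, T, hSg, hTg, hSne, hTne, hinf, hsup⟩
  have hcpl : IsCompl S T := ⟨disjoint_iff.mpr hinf, codisjoint_iff.mpr hsup⟩
  set π : V →ₗ[k] V := S.subtype ∘ₗ Submodule.projectionOnto S T hcpl with hπ
  have hπS : ∀ v ∈ S, π v = v := by
    intro v hv
    have := Submodule.projectionOnto_apply_left hcpl ⟨v, hv⟩
    simp only [hπ, LinearMap.comp_apply, Submodule.coe_subtype]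
    rw [this]
  have hπT : ∀ v ∈ T, π v = 0 := by
    intro v hv
    have := Submodule.projectionOnto_apply_of_mem_right hcpl hv
    simp only [hπ, LinearMap.comp_apply, Submodule.coe_subtype]
    rw [this, Submodule.coe_zero]
  have hπmem : ∀ v, π v ∈ S := fun v => (Submodule.projectionOnto S T hcpl v).2
  have hid : ∀ v, π (π v) = π v := fun v => hπS _ (hπmem v)
  have hdecomp : ∀ v : V, ∃ s ∈ S, ∃ t ∈ T, v = s + t := by
    intro v
    have hv : v ∈ S ⊔ T := by rw [hsup]; trivial
    rcases Submodule.mem_sup.mp hv with ⟨s, hs, t, ht, hst⟩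
    exact ⟨s, hs, t, ht, hst.symm⟩
  have hequiv : ∀ g : K4, ∀ v : V, π (g • v) = g • π v := by
    intro g v
    rcases hdecomp v with ⟨s, hs, t, ht, rfl⟩
    rw [smul_add, map_add, map_add, hπS s hs, hπT t ht, hπS _ (hSg g s hs),
      hπT _ (hTg g t ht), add_zero, add_zero]
  obtain ⟨c, hb, ha⟩ := main_lemma B hV π hequiv
  have hcc : c = c * c := by
    have h1 : π (π (B (Sum.inr 0))) = (c * c) • B (Sum.inr 0) := by
      rw [hb 0, map_smul, hb 0, smul_smul]
    rw [hid, hb 0] at h1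
    exact smul_left_injective k (B.ne_zero (Sum.inr 0)) h1
  have hc01 : c = 0 ∨ c = 1 := by
    rcases eq_or_ne c 0 with h | h
    · exact Or.inl h
    · right
      have : c * 1 = c * c := by rw [mul_one, ← hcc]
      exact (mul_left_cancel₀ h this).symm
  rcases hc01 with hc0 | hc1
  · -- π = 0, so S = ⊥
    have h1 : ∀ m, π (B (Sum.inr m)) = 0 := by
      intro m; rw [hb m, hc0, zero_smul]
    have h2 : ∀ j, π (B (Sum.inl j)) ∈ Wsub B := by
      intro j
      have := ha j
      rwa [hc0, zero_smul, sub_zero] at this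
    have hz := zero_lemma B π h1 h2 hid
    apply hSne
    rw [eq_bot_iff]
    intro v hv
    rw [Submodule.mem_bot, ← hπS v hv, hz, LinearMap.zero_apply]
  · -- 1 - π = 0, so T = ⊥
    set ψ : V →ₗ[k] V := LinearMap.id - π with hψ
    have h1 : ∀ m, ψ (B (Sum.inr m)) = 0 := by
      intro m
      rw [hψ, LinearMap.sub_apply, LinearMap.id_apply, hb m, hc1, one_smul, sub_self]
    have h2 : ∀ j, ψ (B (Sum.inl j)) ∈ Wsub B := by
      intro j
      have hmem := ha j
      rw [hc1, one_smul] at hmem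
      have heq : ψ (B (Sum.inl j)) = -(π (B (Sum.inl j)) - B (Sum.inl j)) := by
        rw [hψ, LinearMap.sub_apply, LinearMap.id_apply, neg_sub]
      rw [heq]
      exact neg_mem hmem
    have hidψ : ∀ v, ψ (ψ v) = ψ v := by
      intro v
      simp only [hψ, LinearMap.sub_apply, LinearMap.id_apply, map_sub, hid]
      abel
    have hz := zero_lemma B ψ h1 h2 hidψ
    apply hTne
    rw [eq_bot_iff]
    intro v hv
    have h3 : ψ v = 0 := by rw [hz, LinearMap.zero_apply]
    rw [hψ, LinearMap.sub_apply, LinearMap.id_apply, hπT v hv, sub_zero] at h3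
    rwa [Submodule.mem_bot]
end

section
/- For every n ≥ 1, the kG-module V_{2n,∞} is indecomposable: it cannot be written as the internal direct sum of two nonzero kG-submodules. -/
noncomputable section

variable (k : Type) [Field k] (n : ℕ) (V : Type) [AddCommGroup V] [Module k V]
  (B : Module.Basis (Fin n ⊕ Fin n) k V)

def paM : V →ₗ[k] (Fin n → k) :=
  LinearMap.pi fun i => (Finsupp.lapply (Sum.inl i)).comp B.repr.toLinearMap

def pbM : V →ₗ[k] (Fin n → k) :=
  LinearMap.pi fun i => (Finsupp.lapply (Sum.inr i)).comp B.repr.toLinearMap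

def xiaM : (Fin n → k) →ₗ[k] V := (Pi.basisFun k (Fin n)).constr k fun i => B (Sum.inl i)

def xibM : (Fin n → k) →ₗ[k] V := (Pi.basisFun k (Fin n)).constr k fun i => B (Sum.inr i)

def shiftM : Module.End k (Fin n → k) where
  toFun c := fun j => if h : (j : ℕ) = 0 then 0 else c ⟨(j : ℕ) - 1, by have := j.isLt; omega⟩
  map_add' c d := by funext j; by_cases h : (j : ℕ) = 0 <;> simp [h]
  map_smul' r c := by funext j; by_cases h : (j : ℕ) = 0 <;> simp [h]

lemma pa_apply (v : V) (i : Fin n) : paM k n V B v i = B.repr v (Sum.inl i) := rfl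
lemma pb_apply (v : V) (i : Fin n) : pbM k n V B v i = B.repr v (Sum.inr i) := rfl

lemma pa_basis_inl (i : Fin n) : paM k n V B (B (Sum.inl i)) = Pi.single i 1 := by
  funext j
  rw [pa_apply, B.repr_self]
  simp [Finsupp.single_apply, Pi.single_apply, eq_comm]

lemma pa_basis_inr (j : Fin n) : paM k n V B (B (Sum.inr j)) = 0 := by
  funext i
  rw [pa_apply, B.repr_self]
  simp [Finsupp.single_apply]

lemma pb_basis_inl (i : Fin n) : pbM k n V B (B (Sum.inl i)) = 0 := by
  funext j
  rw [pb_apply, B.repr_self]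
  simp [Finsupp.single_apply]

lemma pb_basis_inr (j : Fin n) : pbM k n V B (B (Sum.inr j)) = Pi.single j 1 := by
  funext i
  rw [pb_apply, B.repr_self]
  simp [Finsupp.single_apply, Pi.single_apply, eq_comm]

lemma xib_single (i : Fin n) : xibM k n V B (Pi.single i 1) = B (Sum.inr i) := by
  have := (Pi.basisFun k (Fin n)).constr_basis k (fun i => B (Sum.inr i)) i
  rwa [Pi.basisFun_apply] at this

lemma xia_single (i : Fin n) : xiaM k n V B (Pi.single i 1) = B (Sum.inl i) := by
  have := (Pi.basisFun k (Fin n)).constr_basis k (fun i => B (Sum.inl i)) i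
  rwa [Pi.basisFun_apply] at this

lemma pa_xia (c : Fin n → k) : paM k n V B (xiaM k n V B c) = c := by
  have : (paM k n V B).comp (xiaM k n V B) = LinearMap.id := by
    apply (Pi.basisFun k (Fin n)).ext
    intro i
    simp only [LinearMap.comp_apply, Pi.basisFun_apply, LinearMap.id_apply]
    rw [xia_single, pa_basis_inl]
  exact DFunLike.congr_fun this c

lemma pb_xib (c : Fin n → k) : pbM k n V B (xibM k n V B c) = c := by
  have : (pbM k n V B).comp (xibM k n V B) = LinearMap.id := by
    apply (Pi.basisFun k (Fin n)).ext
    intro i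
    simp only [LinearMap.comp_apply, Pi.basisFun_apply, LinearMap.id_apply]
    rw [xib_single, pb_basis_inr]
  exact DFunLike.congr_fun this c

lemma pa_xib (c : Fin n → k) : paM k n V B (xibM k n V B c) = 0 := by
  have : (paM k n V B).comp (xibM k n V B) = 0 := by
    apply (Pi.basisFun k (Fin n)).ext
    intro i
    simp only [LinearMap.comp_apply, Pi.basisFun_apply, LinearMap.zero_apply]
    rw [xib_single, pa_basis_inr]
  exact DFunLike.congr_fun this c

lemma xib_inj : Function.Injective (xibM k n V B) := by
  intro c d h
  have := congrArg (pbM k n V B) h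
  rwa [pb_xib, pb_xib] at this

lemma mem_soc (v : V) (h : paM k n V B v = 0) : v = xibM k n V B (pbM k n V B v) := by
  apply B.repr.injective
  ext x
  cases x with
  | inl i =>
    have h1 : B.repr v (Sum.inl i) = 0 := by rw [← pa_apply, h]; rfl
    have h2 : paM k n V B (xibM k n V B (pbM k n V B v)) = 0 := pa_xib k n V B _
    rw [h1, ← pa_apply, h2]; rfl
  | inr j =>
    have h2 := pb_xib k n V B (pbM k n V B v)
    calc B.repr v (Sum.inr j) = pbM k n V B v j := rfl
      _ = pbM k n V B (xibM k n V B (pbM k n V B v)) j := by rw [h2]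
      _ = _ := rfl


-- shift lemmas
lemma shiftM_single (i : Fin n) :
    shiftM k n (Pi.single i 1) =
      if h : (i : ℕ) + 1 < n then Pi.single (⟨(i : ℕ) + 1, h⟩ : Fin n) 1 else 0 := by
  by_cases h : (i : ℕ) + 1 < n
  · rw [dif_pos h]
    funext j
    by_cases hj : (j : ℕ) = 0
    · have : j ≠ ⟨(i : ℕ) + 1, h⟩ := by
        intro hh; rw [hh] at hj; simp at hj
      simp [shiftM, hj, Pi.single_apply, this]
    · simp only [shiftM, LinearMap.coe_mk, AddHom.coe_mk, dif_neg hj, Pi.single_apply]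
      have : ((⟨(j : ℕ) - 1, by have := j.isLt; omega⟩ : Fin n) = i) ↔ (j = ⟨(i : ℕ) + 1, h⟩) := by
        constructor <;> intro hh <;> apply Fin.ext <;>
          have := congrArg (Fin.val) hh <;> simp at this ⊢ <;> omega
      by_cases hc : j = ⟨(i : ℕ) + 1, h⟩
      · rw [if_pos (this.mpr hc), if_pos hc]
      · rw [if_neg (fun hh => hc (this.mp hh)), if_neg hc]
  · rw [dif_neg h]
    funext j
    by_cases hj : (j : ℕ) = 0
    · simp [shiftM, hj]
    · have hne : (⟨(j : ℕ) - 1, by have := j.isLt; omega⟩ : Fin n) ≠ i := by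
        intro hh
        have h2 : (j : ℕ) - 1 = (i : ℕ) := congrArg Fin.val hh
        have := j.isLt
        omega
      simp [shiftM, hj, Pi.single_apply, hne]

lemma shiftM_pow_lt (m : ℕ) (c : Fin n → k) (j : Fin n) (h : (j : ℕ) < m) :
    ((shiftM k n ^ m) c) j = 0 := by
  induction m generalizing c j with
  | zero => omega
  | succ m ih =>
    rw [pow_succ']
    show shiftM k n ((shiftM k n ^ m) c) j = 0
    by_cases hj : (j : ℕ) = 0
    · cases m with
      | zero =>
        simp [shiftM, hj]
      | succ m => simp [shiftM, hj]
    · simp only [shiftM, LinearMap.coe_mk, AddHom.coe_mk, dif_neg hj]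
      exact ih c ⟨(j : ℕ) - 1, by have := j.isLt; omega⟩ (by show (j : ℕ) - 1 < m; omega)

lemma shiftM_ker (hn : 1 ≤ n) (c : Fin n → k) (h : shiftM k n c = 0) :
    c = c ⟨n - 1, by omega⟩ • (Pi.single (⟨n - 1, by omega⟩ : Fin n) (1 : k) : Fin n → k) := by
  funext j
  by_cases hj : j = (⟨n - 1, by omega⟩ : Fin n)
  · subst hj; rw [Pi.smul_apply, Pi.single_apply, if_pos rfl, smul_eq_mul, mul_one]
  · have hjn : (j : ℕ) + 1 < n := by
      have := j.isLt
      have : (j : ℕ) ≠ n - 1 := fun hh => hj (Fin.ext hh)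
      omega
    have := congrFun h (⟨(j : ℕ) + 1, hjn⟩ : Fin n)
    simp only [shiftM, LinearMap.coe_mk, AddHom.coe_mk, Pi.zero_apply] at this
    rw [dif_neg (by simp)] at this
    simp only [Nat.add_sub_cancel] at this
    rw [Pi.smul_apply, Pi.single_apply, if_neg hj, smul_zero]
    simpa using this

section action

variable [DistribMulAction K4 V] [SMulCommClass K4 k V]

/-- The linear map `v ↦ g • v - v`. -/
def gM (g : K4) : Module.End k V where
  toFun v := g • v - v
  map_add' u v := by
    show g • (u + v) - (u + v) = (g • u - u) + (g • v - v)
    rw [smul_add]; abel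
  map_smul' r v := by
    show g • (r • v) - r • v = r • (g • v - v)
    rw [smul_comm g r v, smul_sub]

lemma gM_apply (g : K4) (v : V) : gM k V g v = g • v - v := rfl

lemma X_eq (hV : IsVinf k n V B) :
    gM k V sg = (xibM k n V B).comp (paM k n V B) := by
  apply B.ext
  intro x
  cases x with
  | inl i =>
    rw [gM_apply, hV.1 i, LinearMap.comp_apply, pa_basis_inl, xib_single]
    abel
  | inr j =>
    rw [gM_apply, hV.2.2.1 j, LinearMap.comp_apply, pa_basis_inr, map_zero, sub_self]

lemma Y_eq (hV : IsVinf k n V B) :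
    gM k V tg = (xibM k n V B).comp ((shiftM k n).comp (paM k n V B)) := by
  apply B.ext
  intro x
  cases x with
  | inl i =>
    rw [gM_apply, hV.2.1 i, LinearMap.comp_apply, LinearMap.comp_apply, pa_basis_inl,
      shiftM_single]
    by_cases h : (i : ℕ) + 1 < n
    · rw [dif_pos h, dif_pos h, xib_single]; abel
    · rw [dif_neg h, dif_neg h, map_zero]; abel
  | inr j =>
    rw [gM_apply, hV.2.2.2 j, LinearMap.comp_apply, LinearMap.comp_apply, pa_basis_inr,
      map_zero, map_zero, sub_self]

lemma X_apply (hV : IsVinf k n V B) (v : V) :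
    sg • v - v = xibM k n V B (paM k n V B v) := by
  have := DFunLike.congr_fun (X_eq k n V B hV) v
  rwa [gM_apply] at this

lemma Y_apply (hV : IsVinf k n V B) (v : V) :
    tg • v - v = xibM k n V B (shiftM k n (paM k n V B v)) := by
  have := DFunLike.congr_fun (Y_eq k n V B hV) v
  rwa [gM_apply] at this

variable (hV : IsVinf k n V B) (S T : Submodule k V)
  (hSg : ∀ g : K4, ∀ v ∈ S, g • v ∈ S) (hTg : ∀ g : K4, ∀ v ∈ T, g • v ∈ T)
  (hST : S ⊓ T = ⊥) (hSTtop : S ⊔ T = ⊤)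

set_option linter.unusedSectionVars false

include hV hSg hTg hST hSTtop

/-- Every socle element splits as `Xu + Xw` with `u ∈ S`, `w ∈ T`. -/
lemma soc_split (c : Fin n → k) :
    ∃ u ∈ S, ∃ w ∈ T, xibM k n V B c = (sg • u - u) + (sg • w - w) := by
  have hx : xiaM k n V B c ∈ S ⊔ T := by rw [hSTtop]; trivial
  obtain ⟨u, hu, w, hw, huw⟩ := Submodule.mem_sup.mp hx
  refine ⟨u, hu, w, hw, ?_⟩
  rw [X_apply k n V B hV u, X_apply k n V B hV w, ← map_add, ← map_add, huw, pa_xia]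

/-- If `xib c ∈ S` then `xib c = xib (pa u)` for some `u ∈ S`. -/
lemma soc_in (c : Fin n → k) (hc : xibM k n V B c ∈ S) :
    ∃ u ∈ S, xibM k n V B c = xibM k n V B (paM k n V B u) := by
  obtain ⟨u, hu, w, hw, huw⟩ := soc_split k n V B hV S T hSg hTg hST hSTtop c
  have hXu : sg • u - u ∈ S := S.sub_mem (hSg sg u hu) hu
  have hXw : sg • w - w ∈ T := T.sub_mem (hTg sg w hw) hw
  have hdiff : xibM k n V B c - (sg • u - u) ∈ S ⊓ T := by
    constructor
    · exact S.sub_mem hc hXu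
    · have : xibM k n V B c - (sg • u - u) = sg • w - w := by rw [huw]; abel
      rw [this]; exact hXw
  rw [hST, Submodule.mem_bot, sub_eq_zero] at hdiff
  exact ⟨u, hu, by rw [hdiff, X_apply k n V B hV u]⟩

/-- `p(S)` is shift-invariant. -/
lemma map_shift_inv (c : Fin n → k) (hc : c ∈ S.map (paM k n V B)) :
    shiftM k n c ∈ S.map (paM k n V B) := by
  obtain ⟨v, hv, rfl⟩ := hc
  have hYv : tg • v - v ∈ S := S.sub_mem (hSg tg v hv) hv
  rw [Y_apply k n V B hV v] at hYv
  obtain ⟨u, hu, huv⟩ := soc_in k n V B hV S T hSg hTg hST hSTtop _ hYv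
  have := xib_inj k n V B huv
  rw [this]
  exact ⟨u, hu, rfl⟩

/-- `p(S) ∩ p(T) = 0`. -/
lemma map_inter (c : Fin n → k) (hcS : c ∈ S.map (paM k n V B))
    (hcT : c ∈ T.map (paM k n V B)) : c = 0 := by
  obtain ⟨v, hv, hvc⟩ := hcS
  obtain ⟨w, hw, hwc⟩ := hcT
  have hvw : paM k n V B (v - w) = 0 := by rw [map_sub, hvc, hwc, sub_self]
  have hsoc := mem_soc k n V B (v - w) hvw
  obtain ⟨u, hu, w', hw', huw⟩ := soc_split k n V B hV S T hSg hTg hST hSTtop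
    (pbM k n V B (v - w))
  have hXu : sg • u - u ∈ S := S.sub_mem (hSg sg u hu) hu
  have hXw : sg • w' - w' ∈ T := T.sub_mem (hTg sg w' hw') hw'
  have hkey : v - (sg • u - u) ∈ S ⊓ T := by
    constructor
    · exact S.sub_mem hv hXu
    · have h2 : v - (sg • u - u) = w + (sg • w' - w') := by
        have h3 : v - w = (sg • u - u) + (sg • w' - w') := by rw [hsoc, huw]
        have h4 : v = w + ((sg • u - u) + (sg • w' - w')) := by
          rw [← h3]; abel
        rw [h4]; abel
      rw [h2]; exact T.add_mem hw hXw
  rw [hST, Submodule.mem_bot, sub_eq_zero] at hkey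
  rw [← hvc, hkey, X_apply k n V B hV u, pa_xib]

/-- If `p(S) = 0` then `S = 0`. -/
lemma core (hSb : S.map (paM k n V B) = ⊥) : S = ⊥ := by
  have hTb : T.map (paM k n V B) = ⊤ := by
    rw [eq_top_iff]
    intro c _
    have hx : xiaM k n V B c ∈ S ⊔ T := by rw [hSTtop]; trivial
    obtain ⟨u, hu, w, hw, huw⟩ := Submodule.mem_sup.mp hx
    have hpu : paM k n V B u = 0 := by
      have : paM k n V B u ∈ S.map (paM k n V B) := ⟨u, hu, rfl⟩
      rwa [hSb, Submodule.mem_bot] at this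
    have : c = paM k n V B w := by
      rw [← pa_xia k n V B c, ← huw, map_add, hpu, zero_add]
    rw [this]
    exact ⟨w, hw, rfl⟩
  have hSocT : ∀ c : Fin n → k, xibM k n V B c ∈ T := by
    intro c
    have : c ∈ T.map (paM k n V B) := by rw [hTb]; trivial
    obtain ⟨w, hw, hwc⟩ := this
    rw [← hwc, ← X_apply k n V B hV w]
    exact T.sub_mem (hTg sg w hw) hw
  rw [eq_bot_iff]
  intro v hv
  have hpv : paM k n V B v = 0 := by
    have : paM k n V B v ∈ S.map (paM k n V B) := ⟨v, hv, rfl⟩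
    rwa [hSb, Submodule.mem_bot] at this
  have hvT : v ∈ T := by
    rw [mem_soc k n V B v hpv]
    exact hSocT _
  have : v ∈ S ⊓ T := ⟨hv, hvT⟩
  rwa [hST] at this

/-- If `p(S) ≠ 0` then the last delta function lies in `p(S)`. -/
lemma single_mem (hn : 1 ≤ n) (hSb : S.map (paM k n V B) ≠ ⊥) :
    (Pi.single (⟨n - 1, by omega⟩ : Fin n) (1 : k) : Fin n → k) ∈ S.map (paM k n V B) := by
  classical
  obtain ⟨c, hc, hcne⟩ := Submodule.exists_mem_ne_zero_of_ne_bot hSb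
  have hiter : ∀ m : ℕ, (shiftM k n ^ m) c ∈ S.map (paM k n V B) := by
    intro m
    induction m with
    | zero => simpa using hc
    | succ m ih =>
      have h5 : (shiftM k n ^ (m + 1)) c = shiftM k n ((shiftM k n ^ m) c) := by
        rw [pow_succ']; rfl
      rw [h5]
      exact map_shift_inv k n V B hV S T hSg hTg hST hSTtop _ ih
  have hzero : ∃ m : ℕ, (shiftM k n ^ m) c = 0 :=
    ⟨n, funext fun j => shiftM_pow_lt k n n c j j.isLt⟩
  set m := Nat.find hzero with hm
  have hspec : (shiftM k n ^ m) c = 0 := Nat.find_spec hzero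
  have hm0 : m ≠ 0 := by
    intro h
    rw [h, pow_zero] at hspec
    exact hcne hspec
  set d := (shiftM k n ^ (m - 1)) c with hd
  have hdne : d ≠ 0 := Nat.find_min hzero (by rw [← hm]; omega)
  have hdmem : d ∈ S.map (paM k n V B) := hiter _
  have hdker : shiftM k n d = 0 := by
    have h6 : shiftM k n d = (shiftM k n ^ m) c := by
      rw [hd, ← Module.End.mul_apply, ← pow_succ']
      have h8 : m - 1 + 1 = m := by omega
      rw [h8]
    rw [h6, hspec]
  have heq := shiftM_ker k n hn d hdker
  have hlast : d ⟨n - 1, by omega⟩ ≠ 0 := by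
    intro h
    rw [h, zero_smul] at heq
    exact hdne heq
  have h7 : (Pi.single (⟨n - 1, by omega⟩ : Fin n) (1 : k) : Fin n → k)
      = (d ⟨n - 1, by omega⟩)⁻¹ • d := by
    rw [eq_comm, inv_smul_eq_iff₀ hlast]
    exact heq
  exact h7 ▸ Submodule.smul_mem _ _ hdmem

end action

end

/-- For every `n ≥ 1`, the `kG`-module `V_{2n,∞}` is indecomposable: it is not the
internal direct sum of two nonzero `kG`-submodules (`G`-invariant `k`-subspaces). -/
theorem stmt15 (k : Type) [Field k] [CharP k 2] (n : ℕ) (hn : 1 ≤ n)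
    (V : Type) [AddCommGroup V] [Module k V] [DistribMulAction K4 V] [SMulCommClass K4 k V]
    (B : Module.Basis (Fin n ⊕ Fin n) k V) (hV : IsVinf k n V B) :
    ¬ ∃ S T : Submodule k V,
        (∀ g : K4, ∀ v ∈ S, g • v ∈ S) ∧ (∀ g : K4, ∀ v ∈ T, g • v ∈ T) ∧
        S ≠ ⊥ ∧ T ≠ ⊥ ∧ S ⊓ T = ⊥ ∧ S ⊔ T = ⊤ := by
  rintro ⟨S, T, hSg, hTg, hS0, hT0, hST, hSTtop⟩
  have hTS : T ⊓ S = ⊥ := by rw [inf_comm]; exact hST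
  have hTStop : T ⊔ S = ⊤ := by rw [sup_comm]; exact hSTtop
  by_cases hSb : S.map (paM k n V B) = ⊥
  · exact hS0 (core k n V B hV S T hSg hTg hST hSTtop hSb)
  by_cases hTb : T.map (paM k n V B) = ⊥
  · exact hT0 (core k n V B hV T S hTg hSg hTS hTStop hTb)
  have h1 := single_mem k n V B hV S T hSg hTg hST hSTtop hn hSb
  have h2 := single_mem k n V B hV T S hTg hSg hTS hTStop hn hTb
  have := map_inter k n V B hV S T hSg hTg hST hSTtop _ h1 h2
  have hone := congrFun this (⟨n - 1, by omega⟩ : Fin n)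
  rw [Pi.single_apply, if_pos rfl] at hone
  exact one_ne_zero hone
end
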